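/- arXiv:2411.04745 — 8 statements merged into one kernel-verified Lean document; each statement's English description precedes it below -/
import Mathlib

section
/- Let R be a commutative ring that is either a field or a countable principal ideal domain. Let M be an R-module and let M = M_0 ⊇ M_1 ⊇ M_2 ⊇ ⋯ be a descending sequence of submodules that does not stabilise, i.e., for every j the intersection ⋂_i M_i is not equal to M_j. Then the inverse limit lim (M/M_i), taken along the natural quotient maps M/M_{i+1} → M/M_i, is not a countably generated R-module. -/
/-- The Eilenberg map `Δ : ∏ᵢ Mᵢ → ∏ᵢ Mᵢ`, `Δ((mᵢ)ᵢ) = (mᵢ − gᵢ(m_{i+1}))ᵢ`, of an inverse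
sequence of `R`-modules `(Mᵢ, gᵢ)`. -/
noncomputable def eilenberg (R : Type) [CommRing R] (M : ℕ → Type)
    [∀ i, AddCommGroup (M i)] [∀ i, Module R (M i)]
    (g : ∀ i : ℕ, M (i + 1) →ₗ[R] M i) : ((i : ℕ) → M i) →ₗ[R] ((i : ℕ) → M i) where
  toFun x := fun i => x i - g i (x (i + 1))
  map_add' x y := by
    funext i
    simp only [Pi.add_apply, map_add]
    abel
  map_smul' c x := by
    funext i
    simp only [Pi.smul_apply, map_smul, RingHom.id_apply, smul_sub]

/-- The inverse limit `lim Mᵢ` of an inverse sequence, as the kernel of the Eilenberg map. -/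
noncomputable def invLim (R : Type) [CommRing R] (M : ℕ → Type)
    [∀ i, AddCommGroup (M i)] [∀ i, Module R (M i)]
    (g : ∀ i : ℕ, M (i + 1) →ₗ[R] M i) : Submodule R ((i : ℕ) → M i) :=
  LinearMap.ker (eilenberg R M g)

/-- The derived limit `lim¹ Mᵢ` of an inverse sequence, as the cokernel of the Eilenberg map. -/
noncomputable abbrev derivedLim (R : Type) [CommRing R] (M : ℕ → Type)
    [∀ i, AddCommGroup (M i)] [∀ i, Module R (M i)]
    (g : ∀ i : ℕ, M (i + 1) →ₗ[R] M i) : Type :=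
  ((i : ℕ) → M i) ⧸ LinearMap.range (eilenberg R M g)

/-- The projection `lim Mᵢ → M_k`. -/
noncomputable def limProj (R : Type) [CommRing R] (M : ℕ → Type)
    [∀ i, AddCommGroup (M i)] [∀ i, Module R (M i)]
    (g : ∀ i : ℕ, M (i + 1) →ₗ[R] M i) (k : ℕ) : ↥(invLim R M g) →ₗ[R] M k :=
  (LinearMap.proj k).comp (invLim R M g).subtype

/-- The composite bonding map `f_i^{i+j} : M_{i+j} → M_i` of an inverse sequence. -/
noncomputable def transDown (R : Type) [CommRing R] (M : ℕ → Type)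
    [∀ i, AddCommGroup (M i)] [∀ i, Module R (M i)]
    (g : ∀ i : ℕ, M (i + 1) →ₗ[R] M i) : (i j : ℕ) → M (i + j) →ₗ[R] M i
  | _, 0 => LinearMap.id
  | i, j + 1 => (transDown R M g i j).comp (g (i + j))

/-- An inverse sequence satisfies the *Mittag-Leffler condition* if for every `i` the
decreasing sequence of images `range f_i^j ⊆ M_i` is eventually constant. -/
def MittagLeffler (R : Type) [CommRing R] (M : ℕ → Type)
    [∀ i, AddCommGroup (M i)] [∀ i, Module R (M i)]
    (g : ∀ i : ℕ, M (i + 1) →ₗ[R] M i) : Prop :=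
  ∀ i : ℕ, ∃ j : ℕ, ∀ k : ℕ,
    LinearMap.range (transDown R M g i (j + k)) = LinearMap.range (transDown R M g i j)

/-- An inverse sequence is *stable* if it satisfies the Mittag-Leffler condition and the
projections `lim Mᵢ → Mᵢ` are injective for all sufficiently large `i`. -/
def IsStable (R : Type) [CommRing R] (M : ℕ → Type)
    [∀ i, AddCommGroup (M i)] [∀ i, Module R (M i)]
    (g : ∀ i : ℕ, M (i + 1) →ₗ[R] M i) : Prop :=
  MittagLeffler R M g ∧ ∃ i₀ : ℕ, ∀ i : ℕ, i₀ ≤ i → Function.Injective (limProj R M g i)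

/-- An `R`-module is *countably generated* if it is the span of a countable subset. -/
def CountablyGeneratedMod (R : Type) (M : Type) [CommRing R] [AddCommGroup M]
    [Module R M] : Prop :=
  ∃ S : Set M, S.Countable ∧ Submodule.span R S = ⊤

theorem aux_invLim {R : Type} [CommRing R]
    (hR : IsField R ∨ (Countable R ∧ IsDomain R ∧ IsPrincipalIdealRing R))
    {M : Type} [AddCommGroup M] [Module R M]
    (N : ℕ → Submodule R M) (hdesc : ∀ i : ℕ, N (i + 1) ≤ N i)
    (hnotstab : ∀ j : ℕ, (⨅ i : ℕ, N i) ≠ N j)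
    (g : ∀ i : ℕ, (M ⧸ N (i + 1)) →ₗ[R] (M ⧸ N i))
    (hgmk : ∀ i (m : M), g i (Submodule.Quotient.mk m) = Submodule.Quotient.mk m) :
    ¬ CountablyGeneratedMod R ↥(invLim R (fun i => M ⧸ N i) g) := by
  classical
  intro hcg
  have anti : Antitone N := antitone_nat_of_succ_le hdesc
  have key : ∀ j : ℕ, ∃ i, j < i ∧ N i < N j := by
    intro j
    have hle : (⨅ i, N i) ≤ N j := iInf_le _ j
    have hlt : (⨅ i, N i) < N j := lt_of_le_of_ne hle (hnotstab j)
    obtain ⟨y, hyj, hyi⟩ := SetLike.exists_of_lt hlt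
    rw [Submodule.mem_iInf] at hyi
    push_neg at hyi
    obtain ⟨i, hi⟩ := hyi
    refine ⟨max (j + 1) i, lt_of_lt_of_le (Nat.lt_succ_self j) (le_max_left _ _), ?_⟩
    have h1 : N (max (j + 1) i) ≤ N i := anti (le_max_right _ _)
    have h2 : N (max (j + 1) i) ≤ N j := anti (le_trans (Nat.le_succ j) (le_max_left _ _))
    exact lt_of_le_of_ne h2 (fun he => hi (h1 (he ▸ hyj)))
  choose f hf1 hf2 using key
  set k : ℕ → ℕ := fun n => f^[n] 0 with hk
  have hk_succ : ∀ n, k (n + 1) = f (k n) := fun n => Function.iterate_succ_apply' f n 0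
  have hk_mono : StrictMono k := strictMono_nat_of_lt_succ (fun n => by rw [hk_succ]; exact hf1 _)
  have hk_ge : ∀ n, n ≤ k n := by
    intro n
    induction n with
    | zero => exact Nat.zero_le _
    | succ n ih => exact Nat.succ_le_of_lt (lt_of_le_of_lt ih (hk_mono (Nat.lt_succ_self n)))
  have hNlt : ∀ n, N (k (n + 1)) < N (k n) := fun n => by rw [hk_succ]; exact hf2 _
  have hxex : ∀ n, ∃ y, y ∈ N (k n) ∧ y ∉ N (k (n + 1)) := by
    intro n
    obtain ⟨y, h1, h2⟩ := SetLike.exists_of_lt (hNlt n)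
    exact ⟨y, h1, h2⟩
  choose x hx1 hx2 using hxex
  set s : (ℕ → R) → ℕ → M := fun c i => ∑ n ∈ Finset.range i, c n • x n with hs_def
  have hmem : ∀ c : ℕ → R,
      (fun i => Submodule.Quotient.mk (s c i) : ∀ i, M ⧸ N i) ∈
        invLim R (fun i => M ⧸ N i) g := by
    intro c
    rw [invLim, LinearMap.mem_ker]
    funext i
    show Submodule.Quotient.mk (s c i) - g i (Submodule.Quotient.mk (s c (i + 1))) = 0
    rw [hgmk, sub_eq_zero, Submodule.Quotient.eq]
    have h1 : s c (i + 1) = s c i + c i • x i := Finset.sum_range_succ _ _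
    have h2 : s c i - s c (i + 1) = -(c i • x i) := by rw [h1]; abel
    rw [h2]
    exact (N i).neg_mem ((N i).smul_mem (c i) (anti (hk_ge i) (hx1 i)))
  set Φ : (ℕ → R) →ₗ[R] ↥(invLim R (fun i => M ⧸ N i) g) :=
    { toFun := fun c => ⟨fun i => Submodule.Quotient.mk (s c i), hmem c⟩
      map_add' := fun c d => by
        apply Subtype.ext
        funext i
        show Submodule.Quotient.mk (p := N i) (s (c + d) i)
          = Submodule.Quotient.mk (p := N i) (s c i) + Submodule.Quotient.mk (p := N i) (s d i)
        rw [← Submodule.Quotient.mk_add]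
        congr 1
        simp [hs_def, add_smul, Finset.sum_add_distrib]
      map_smul' := fun r c => by
        apply Subtype.ext
        funext i
        show Submodule.Quotient.mk (p := N i) (s (r • c) i) = r • Submodule.Quotient.mk (p := N i) (s c i)
        rw [← Submodule.Quotient.mk_smul]
        congr 1
        simp [hs_def, mul_smul, Finset.smul_sum] } with hΦ_def
  have hkerlem : ∀ (c : ℕ → R) (n₀ : ℕ), Φ c = 0 → (∀ m, m < n₀ → c m = 0) →
      c n₀ • x n₀ ∈ N (k (n₀ + 1)) := by
    intro c n₀ hc hc0
    have hs : ∀ i, s c i ∈ N i := by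
      intro i
      have h1 : (Φ c).1 i = 0 := by rw [hc]; rfl
      exact (Submodule.Quotient.mk_eq_zero _).mp h1
    have hi : n₀ + 1 ≤ k (n₀ + 1) := hk_ge (n₀ + 1)
    have hsplit : (∑ n ∈ Finset.range (n₀ + 1), c n • x n)
        + ∑ n ∈ Finset.Ico (n₀ + 1) (k (n₀ + 1)), c n • x n = s c (k (n₀ + 1)) :=
      Finset.sum_range_add_sum_Ico _ hi
    have h1 : (∑ n ∈ Finset.range (n₀ + 1), c n • x n) = c n₀ • x n₀ := by
      rw [Finset.sum_range_succ, Finset.sum_eq_zero, zero_add]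
      intro m hm
      rw [hc0 m (Finset.mem_range.mp hm), zero_smul]
    have h2 : (∑ n ∈ Finset.Ico (n₀ + 1) (k (n₀ + 1)), c n • x n) ∈ N (k (n₀ + 1)) := by
      refine Submodule.sum_mem _ (fun m hm => ?_)
      obtain ⟨hm1, hm2⟩ := Finset.mem_Ico.mp hm
      exact Submodule.smul_mem _ _ (anti (hk_mono.monotone hm1) (hx1 m))
    have h4 := (N (k (n₀ + 1))).sub_mem (hs (k (n₀ + 1))) h2
    rw [← hsplit, h1, add_sub_cancel_right] at h4
    exact h4
  have caseCountable : Countable R → False := by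
    intro hcnt
    obtain ⟨S, hSc, hSpan⟩ := hcg
    haveI := hSc.to_subtype
    have hsurj : Function.Surjective
        (Finsupp.linearCombination R ((↑) : S → ↥(invLim R (fun i => M ⧸ N i) g))) := by
      rw [← LinearMap.range_eq_top, Finsupp.range_linearCombination, Subtype.range_coe]
      exact hSpan
    haveI hLc : Countable ↥(invLim R (fun i => M ⧸ N i) g) := hsurj.countable
    have hinj : Function.Injective
        (fun c : ℕ → Bool => Φ (fun n => if c n then (1 : R) else 0)) := by
      intro c c' hcc
      by_contra hne
      have hex : ∃ n, c n ≠ c' n := by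
        by_contra h
        push_neg at h
        exact hne (funext h)
      have hcc' : Φ (fun n => if c n then (1 : R) else 0)
          = Φ (fun n => if c' n then (1 : R) else 0) := hcc
      have hΦ0 : Φ ((fun n => if c n then (1 : R) else 0)
          - fun n => if c' n then (1 : R) else 0) = 0 := by
        rw [map_sub, hcc', sub_self]
      have hd0 : ∀ m, m < Nat.find hex →
          ((fun n => if c n then (1 : R) else 0) - fun n => if c' n then (1 : R) else 0) m = 0 := by
        intro m hm
        have h1 : c m = c' m := not_not.mp (Nat.find_min hex hm)
        simp [h1]
      have hmem' := hkerlem _ (Nat.find hex) hΦ0 hd0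
      have hne0 : c (Nat.find hex) ≠ c' (Nat.find hex) := Nat.find_spec hex
      have hx2' := hx2 (Nat.find hex)
      cases hc1 : c (Nat.find hex) <;> cases hc2 : c' (Nat.find hex)
      · exact hne0 (by rw [hc1, hc2])
      · have hmm : (-1 : R) • x (Nat.find hex) ∈ N (k (Nat.find hex + 1)) := by
          simpa [hc1, hc2] using hmem'
        rw [neg_smul, one_smul] at hmm
        exact hx2' ((N _).neg_mem_iff.mp hmm)
      · have hmm : (1 : R) • x (Nat.find hex) ∈ N (k (Nat.find hex + 1)) := by
          simpa [hc1, hc2] using hmem'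
        rw [one_smul] at hmm
        exact hx2' hmm
      · exact hne0 (by rw [hc1, hc2])
    haveI hCb : Countable (ℕ → Bool) := hinj.countable
    have hnc : ¬ Countable (Set ℕ) := by
      intro hS
      have h1 : Cardinal.mk (Set ℕ) ≤ Cardinal.aleph0 := Cardinal.mk_le_aleph0
      rw [Cardinal.mk_set, Cardinal.mk_nat] at h1
      exact absurd (lt_of_lt_of_le (Cardinal.cantor _) h1) (lt_irrefl _)
    apply hnc
    have hsurj2 : Function.Surjective (fun f : ℕ → Bool => {n | f n = true}) := by
      intro sset
      exact ⟨fun n => decide (n ∈ sset), by ext n; simp⟩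
    exact hsurj2.countable
  rcases hR with hfield | ⟨hcnt, hdom, hpid⟩
  · letI : Field R := hfield.toField
    by_cases hRc : Countable R
    · exact caseCountable hRc
    · haveI : Uncountable R := not_countable_iff.mp hRc
      obtain ⟨S, hSc, hSpan⟩ := hcg
      haveI := hSc.to_subtype
      have hrank : Module.rank R ↥(invLim R (fun i => M ⧸ N i) g) ≤ Cardinal.aleph0 := by
        have h1 := rank_span_le (R := R) S
        rw [hSpan, rank_top] at h1
        exact le_trans h1 Cardinal.mk_le_aleph0
      have hΦinj : Function.Injective Φ := by
        refine (injective_iff_map_eq_zero Φ).mpr ?_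
        intro c hc
        by_contra hne
        have hex : ∃ n, c n ≠ 0 := by
          by_contra h
          push_neg at h
          exact hne (funext h)
        have h0 : ∀ m, m < Nat.find hex → c m = 0 := fun m hm => not_not.mp (Nat.find_min hex hm)
        have hm := hkerlem c (Nat.find hex) hc h0
        have hcn : c (Nat.find hex) ≠ 0 := Nat.find_spec hex
        have hxmem : x (Nat.find hex) ∈ N (k (Nat.find hex + 1)) := by
          have h5 := Submodule.smul_mem _ (c (Nat.find hex))⁻¹ hm
          rwa [smul_smul, inv_mul_cancel₀ hcn, one_smul] at h5
        exact hx2 (Nat.find hex) hxmem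
      have hvdm : LinearIndependent R (fun r : R => (fun n : ℕ => r ^ n)) := by
        rw [linearIndependent_iff']
        intro t gc hsum r hr
        have hcoord : ∀ m : ℕ, ∑ a ∈ t, gc a * a ^ m = 0 := by
          intro m
          have h6 := congrFun hsum m
          simpa [Finset.sum_apply] using h6
        set n := t.card with hn
        set e := t.equivFin with he
        set w : Fin n → R := fun j => ((e.symm j : ↥t) : R) with hw_def
        have hw : Function.Injective w := fun a b hab =>
          e.symm.injective (Subtype.coe_injective hab)
        have hzero : (fun j => gc (w j)) = 0 := by
          apply Matrix.eq_zero_of_forall_pow_sum_mul_pow_eq_zero hw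
          intro i
          have h7 := hcoord (i : ℕ)
          rw [← Finset.sum_coe_sort t (fun a => gc a * a ^ (i : ℕ))] at h7
          rw [← Equiv.sum_comp e.symm (fun a : ↥t => gc (a : R) * (a : R) ^ (i : ℕ))] at h7
          exact h7
        have h8 := congrFun hzero (e ⟨r, hr⟩)
        simpa [hw_def] using h8
      have hind := (hvdm.map' Φ (LinearMap.ker_eq_bot.mpr hΦinj)).cardinal_le_rank
      exact absurd (lt_of_lt_of_le (Cardinal.aleph0_lt_mk (α := R)) (le_trans hind hrank))
        (lt_irrefl _)
  · exact caseCountable hcnt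

/-- Let `R` be a field or a countable PID, `M` an `R`-module and
`M = N 0 ⊇ N 1 ⊇ N 2 ⊇ ⋯` a descending chain of submodules that does not stabilise
(for every `j`, `⨅ i, N i ≠ N j`).  Then the inverse limit `lim (M ⧸ N i)`, taken along
the natural quotient maps, is not a countably generated `R`-module. -/
theorem invLim_quotient_not_countablyGenerated
    (R : Type) [CommRing R]
    (hR : IsField R ∨ (Countable R ∧ IsDomain R ∧ IsPrincipalIdealRing R))
    (M : Type) [AddCommGroup M] [Module R M]
    (N : ℕ → Submodule R M) (hN0 : N 0 = ⊤) (hdesc : ∀ i : ℕ, N (i + 1) ≤ N i)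
    (hnotstab : ∀ j : ℕ, (⨅ i : ℕ, N i) ≠ N j) :
    ¬ CountablyGeneratedMod R
        ↥(invLim R (fun i => M ⧸ N i)
          (fun i => Submodule.mapQ (N (i + 1)) (N i) LinearMap.id
            (by simpa using hdesc i))) := by
  exact aux_invLim hR N hdesc hnotstab _
    (fun i m => by rw [Submodule.mapQ_apply]; rfl)
end

section
/- Let R be a commutative ring that is either a field or a countable principal ideal domain. If (M_i, g_i) is an inverse sequence of countably generated R-modules that does not satisfy the Mittag-Leffler condition, then the derived limit lim¹ M_i (the cokernel of the Eilenberg map) is not a countably generated R-module; in particular it is nonzero. -/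
/- ### Auxiliary machinery for the proof -/

open Function Cardinal in
private lemma auxNotCountableNatBool : ¬ Countable (ℕ → Bool) := by
  intro h
  classical
  obtain ⟨f, hf⟩ := exists_injective_nat (ℕ → Bool)
  have hg : Function.Injective (fun s : Set ℕ => fun k => decide (k ∈ s)) := by
    intro s s' h'
    ext k
    simpa using congrFun h' k
  exact Function.cantor_injective _ (hf.comp hg)

private lemma auxCountableOfCG (R N : Type) [CommRing R] [AddCommGroup N] [Module R N]
    [Countable R] (h : CountablyGeneratedMod R N) : Countable N := by
  obtain ⟨S, hSc, hSs⟩ := h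
  haveI := hSc.to_subtype
  have hsurj : Function.Surjective (Finsupp.linearCombination R ((↑) : S → N)) := by
    rw [← LinearMap.range_eq_top, ← Finsupp.span_eq_range_linearCombination, hSs]
  exact hsurj.countable

open Cardinal in
private lemma auxRankLeOfCG (R N : Type) [CommRing R] [StrongRankCondition R] [AddCommGroup N]
    [Module R N] (h : CountablyGeneratedMod R N) : Module.rank R N ≤ ℵ₀ := by
  obtain ⟨S, hSc, hSs⟩ := h
  calc Module.rank R N = Module.rank R (⊤ : Submodule R N) := (rank_top R N).symm
    _ = Module.rank R (Submodule.span R S) := by rw [hSs]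
    _ ≤ #S := rank_span_le S
    _ ≤ ℵ₀ := hSc.le_aleph0

noncomputable section DerivedLimAux

variable (R : Type) [CommRing R] (M : ℕ → Type)
    [∀ i, AddCommGroup (M i)] [∀ i, Module R (M i)]
    (g : ∀ i : ℕ, M (i + 1) →ₗ[R] M i) (i₀ : ℕ)

/-- The tower of images in `M i₀`. -/
private def ATow (j : ℕ) : Submodule R (M i₀) := LinearMap.range (transDown R M g i₀ j)

private lemma ATow_antitone : Antitone (ATow R M g i₀) := by
  apply antitone_nat_of_succ_le
  intro j
  rintro _ ⟨x, rfl⟩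
  exact ⟨g (i₀ + j) x, rfl⟩

/-- Partial sum map `x ↦ ∑_{m < N} f_{i₀}^{i₀+m} (x (i₀+m))`. -/
private def sMap (N : ℕ) : ((i : ℕ) → M i) →ₗ[R] M i₀ :=
  ∑ m ∈ Finset.range N, (transDown R M g i₀ m).comp (LinearMap.proj (i₀ + m))

private lemma sMap_apply (N : ℕ) (x : (i : ℕ) → M i) :
    sMap R M g i₀ N x = ∑ m ∈ Finset.range N, transDown R M g i₀ m (x (i₀ + m)) := by
  simp [sMap]

private lemma sMap_eilenberg (N : ℕ) (y : (i : ℕ) → M i) :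
    sMap R M g i₀ N (eilenberg R M g y)
      = y i₀ - transDown R M g i₀ N (y (i₀ + N)) := by
  have key : ∀ m : ℕ, transDown R M g i₀ m ((eilenberg R M g y) (i₀ + m))
      = transDown R M g i₀ m (y (i₀ + m)) - transDown R M g i₀ (m + 1) (y (i₀ + (m + 1))) := by
    intro m
    have : (eilenberg R M g y) (i₀ + m) = y (i₀ + m) - g (i₀ + m) (y (i₀ + m + 1)) := rfl
    rw [this, map_sub]
    congr 1
  rw [sMap_apply]
  calc (∑ m ∈ Finset.range N, transDown R M g i₀ m ((eilenberg R M g y) (i₀ + m)))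
      = ∑ m ∈ Finset.range N, (transDown R M g i₀ m (y (i₀ + m))
          - transDown R M g i₀ (m + 1) (y (i₀ + (m + 1)))) := by
        exact Finset.sum_congr rfl fun m _ => key m
    _ = transDown R M g i₀ 0 (y (i₀ + 0)) - transDown R M g i₀ N (y (i₀ + N)) :=
        Finset.sum_range_sub' (fun m => transDown R M g i₀ m (y (i₀ + m))) N
    _ = y i₀ - transDown R M g i₀ N (y (i₀ + N)) := rfl

variable (n : ℕ → ℕ) (b : ∀ k : ℕ, M (i₀ + n k))

/-- The element `a k = f_{i₀}^{i₀+n k} (b k)`. -/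
private def aElt (k : ℕ) : M i₀ := transDown R M g i₀ (n k) (b k)

open Classical in
/-- The linear map `(ℕ → R) → ∏ M i` sending `t` to `∑ k, t k • Pi.single (i₀ + n k) (b k)`. -/
private def Xmap : (ℕ → R) →ₗ[R] ((i : ℕ) → M i) where
  toFun t := fun i => ∑ k ∈ Finset.range (i + 1), t k • Pi.single (M := M) (i₀ + n k) (b k) i
  map_add' s t := by
    funext i
    simp [add_smul, Finset.sum_add_distrib]
  map_smul' c t := by
    funext i
    simp [smul_smul, Finset.smul_sum]

open Classical in
private lemma Xmap_apply_lt (hn : StrictMono n) (t : ℕ → R) (j i : ℕ) (hi : i < i₀ + n j) :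
    Xmap R M i₀ n b t i
      = (∑ k ∈ Finset.range j, t k • Pi.single (M := M) (i₀ + n k) (b k)) i := by
  have hzero : ∀ k : ℕ, i₀ + n k ≠ i →
      t k • Pi.single (M := M) (i₀ + n k) (b k) i = 0 := by
    intro k hk
    rw [Pi.single_eq_of_ne (fun h => hk h.symm), smul_zero]
  have h1 : Xmap R M i₀ n b t i
      = ∑ k ∈ Finset.range (i + 1 + j), t k • Pi.single (M := M) (i₀ + n k) (b k) i := by
    show (∑ k ∈ Finset.range (i + 1), t k • Pi.single (M := M) (i₀ + n k) (b k) i) = _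
    apply Finset.sum_subset
    · exact Finset.range_subset_range.mpr (Nat.le_add_right _ _)
    · intro k _ hk
      apply hzero
      intro hik
      exact hk (Finset.mem_range.mpr (Nat.lt_succ_of_le (le_trans hn.le_apply
        (le_trans (Nat.le_add_left _ _) hik.le))))
  have h2 : (∑ k ∈ Finset.range j, t k • Pi.single (M := M) (i₀ + n k) (b k)) i
      = ∑ k ∈ Finset.range (i + 1 + j), t k • Pi.single (M := M) (i₀ + n k) (b k) i := by
    rw [Finset.sum_apply]
    apply Finset.sum_subset
    · exact Finset.range_subset_range.mpr (Nat.le_add_left _ _)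
    · intro k _ hk
      apply hzero
      intro hik
      have hkj : j ≤ k := le_of_not_gt (fun h => hk (Finset.mem_range.mpr h))
      have : i₀ + n k < i₀ + n j := hik ▸ hi
      exact absurd (hn.monotone hkj) (not_le.mpr (Nat.lt_of_add_lt_add_left this))
  rw [h1, h2]

open Classical in
private lemma sMap_single (hn : StrictMono n) (j k : ℕ) (hk : k < j) :
    sMap R M g i₀ (n j) (Pi.single (M := M) (i₀ + n k) (b k)) = aElt R M g i₀ n b k := by
  rw [sMap_apply]
  rw [Finset.sum_eq_single_of_mem (n k) (Finset.mem_range.mpr (hn hk))]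
  · rw [show Pi.single (M := M) (i₀ + n k) (b k) (i₀ + n k) = b k from Pi.single_eq_same _ _]
    rfl
  · intro m _ hm
    rw [Pi.single_eq_of_ne (fun h => hm (Nat.add_left_cancel h)), map_zero]

private lemma sMap_Xmap (hn : StrictMono n) (t : ℕ → R) (j : ℕ) :
    sMap R M g i₀ (n j) (Xmap R M i₀ n b t)
      = ∑ k ∈ Finset.range j, t k • aElt R M g i₀ n b k := by
  classical
  have h1 : sMap R M g i₀ (n j) (Xmap R M i₀ n b t)
      = sMap R M g i₀ (n j) (∑ k ∈ Finset.range j, t k • Pi.single (M := M) (i₀ + n k) (b k)) := by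
    rw [sMap_apply, sMap_apply]
    apply Finset.sum_congr rfl
    intro m hm
    rw [Xmap_apply_lt R M i₀ n b hn t j (i₀ + m)
      (Nat.add_lt_add_left (Finset.mem_range.mp hm) i₀)]
  rw [h1, map_sum]
  apply Finset.sum_congr rfl
  intro k hk
  rw [map_smul, sMap_single R M g i₀ n b hn j k (Finset.mem_range.mp hk)]

/-- The diagonal map into the product of quotients. -/
private def Dmap : M i₀ →ₗ[R] ((j : ℕ) → M i₀ ⧸ ATow R M g i₀ (n j)) :=
  LinearMap.pi fun j => (ATow R M g i₀ (n j)).mkQ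

private def Smap : ((i : ℕ) → M i) →ₗ[R] ((j : ℕ) → M i₀ ⧸ ATow R M g i₀ (n j)) :=
  LinearMap.pi fun j => (ATow R M g i₀ (n j)).mkQ.comp (sMap R M g i₀ (n j))

/-- The key linear map from the product to the "completion quotient". -/
private def Phi : ((i : ℕ) → M i) →ₗ[R]
    (((j : ℕ) → M i₀ ⧸ ATow R M g i₀ (n j)) ⧸ LinearMap.range (Dmap R M g i₀ n)) :=
  (LinearMap.range (Dmap R M g i₀ n)).mkQ.comp (Smap R M g i₀ n)

private lemma phi_eq_iff (x x' : (i : ℕ) → M i) :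
    Phi R M g i₀ n x = Phi R M g i₀ n x' ↔
      ∃ a : M i₀, ∀ j : ℕ,
        sMap R M g i₀ (n j) x - sMap R M g i₀ (n j) x' - a ∈ ATow R M g i₀ (n j) := by
  simp only [Phi, LinearMap.comp_apply, Submodule.mkQ_apply]
  rw [Submodule.Quotient.eq, LinearMap.mem_range]
  constructor
  · rintro ⟨a, ha⟩
    refine ⟨a, fun j => ?_⟩
    have hj := congrFun ha j
    simp only [Dmap, Smap, LinearMap.pi_apply, Submodule.mkQ_apply, Pi.sub_apply,
      LinearMap.comp_apply, ← Submodule.Quotient.mk_sub] at hj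
    have hm := (Submodule.Quotient.eq _).mp hj
    have e : sMap R M g i₀ (n j) x - sMap R M g i₀ (n j) x' - a
        = -(a - (sMap R M g i₀ (n j) x - sMap R M g i₀ (n j) x')) := by abel
    rw [e]
    exact neg_mem hm
  · rintro ⟨a, ha⟩
    refine ⟨a, ?_⟩
    funext j
    simp only [Dmap, Smap, LinearMap.pi_apply, Submodule.mkQ_apply, Pi.sub_apply,
      LinearMap.comp_apply, ← Submodule.Quotient.mk_sub]
    rw [Submodule.Quotient.eq]
    have e : a - (sMap R M g i₀ (n j) x - sMap R M g i₀ (n j) x')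
        = -(sMap R M g i₀ (n j) x - sMap R M g i₀ (n j) x' - a) := by abel
    rw [e]
    exact neg_mem (ha j)

private lemma phi_eilenberg (y : (i : ℕ) → M i) :
    Phi R M g i₀ n (eilenberg R M g y) = 0 := by
  simp only [Phi, LinearMap.comp_apply, Submodule.mkQ_apply]
  rw [Submodule.Quotient.mk_eq_zero, LinearMap.mem_range]
  refine ⟨y i₀, ?_⟩
  funext j
  simp only [Dmap, Smap, LinearMap.pi_apply, Submodule.mkQ_apply, LinearMap.comp_apply]
  rw [sMap_eilenberg, Submodule.Quotient.eq]
  have e : y i₀ - (y i₀ - transDown R M g i₀ (n j) (y (i₀ + n j)))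
      = transDown R M g i₀ (n j) (y (i₀ + n j)) := by abel
  rw [e]
  exact ⟨y (i₀ + n j), rfl⟩

private lemma vanish (aE : ℕ → M i₀) (c : ℕ → R)
    (h : ∀ j : ℕ, (∑ k ∈ Finset.range j, c k • aE k) ∈ ATow R M g i₀ (n j))
    (hc : ∀ k : ℕ, c k • aE k ∈ ATow R M g i₀ (n (k + 1)) → c k = 0) :
    ∀ k : ℕ, c k = 0 := by
  intro k
  induction k using Nat.strong_induction_on with
  | _ k ih =>
    apply hc
    have h1 := h (k + 1)
    rwa [Finset.sum_range_succ, Finset.sum_eq_zero (fun l hl => by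
      rw [ih l (Finset.mem_range.mp hl), zero_smul]), zero_add] at h1

end DerivedLimAux


/-- Let `R` be a field or a countable PID.  If `(Mᵢ, gᵢ)` is an inverse sequence of countably
generated `R`-modules that does not satisfy the Mittag-Leffler condition, then the derived
limit `lim¹ Mᵢ` is not a countably generated `R`-module; in particular it is nonzero. -/
theorem derivedLim_not_countablyGenerated_of_not_mittagLeffler
    (R : Type) [CommRing R]
    (hR : IsField R ∨ (Countable R ∧ IsDomain R ∧ IsPrincipalIdealRing R))
    (M : ℕ → Type) [∀ i, AddCommGroup (M i)] [∀ i, Module R (M i)]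
    (g : ∀ i : ℕ, M (i + 1) →ₗ[R] M i)
    (hcg : ∀ i : ℕ, CountablyGeneratedMod R (M i))
    (hml : ¬ MittagLeffler R M g) :
    ¬ CountablyGeneratedMod R (derivedLim R M g) ∧ Nontrivial (derivedLim R M g) := by
  classical
  suffices main : ¬ CountablyGeneratedMod R (derivedLim R M g) by
    refine ⟨main, ?_⟩
    rw [← not_subsingleton_iff_nontrivial]
    intro h
    refine main ⟨∅, Set.countable_empty, ?_⟩
    rw [eq_top_iff]
    intro x _
    rw [Subsingleton.elim x 0]
    exact Submodule.zero_mem _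
  intro hcgd
  rw [MittagLeffler] at hml
  push_neg at hml
  obtain ⟨i₀, hseq⟩ := hml
  choose K hK using hseq
  have hK' : ∀ j : ℕ, ATow R M g i₀ (j + K j) ≠ ATow R M g i₀ j := hK
  have hK0 : ∀ j, K j ≠ 0 := by
    intro j h0
    exact hK' j (by rw [h0, Nat.add_zero])
  set n : ℕ → ℕ := fun k => Nat.rec 0 (fun _ m => m + K m) k with hn
  have hn_succ : ∀ k, n (k + 1) = n k + K (n k) := fun k => rfl
  have hnmono : StrictMono n := strictMono_nat_of_lt_succ fun k => by
    rw [hn_succ]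
    exact Nat.lt_add_of_pos_right (Nat.pos_of_ne_zero (hK0 _))
  have hlt : ∀ k, ATow R M g i₀ (n (k + 1)) < ATow R M g i₀ (n k) := fun k =>
    lt_of_le_of_ne (ATow_antitone R M g i₀ (hnmono.monotone (Nat.le_succ k)))
      (by rw [hn_succ]; exact hK' (n k))
  have hex : ∀ k, ∃ y : M (i₀ + n k),
      transDown R M g i₀ (n k) y ∉ ATow R M g i₀ (n (k + 1)) := by
    intro k
    obtain ⟨x, hx1, hx2⟩ := SetLike.exists_of_lt (hlt k)
    obtain ⟨y, rfl⟩ := hx1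
    exact ⟨y, hx2⟩
  choose b hb using hex
  have hbA : ∀ k, aElt R M g i₀ n b k ∉ ATow R M g i₀ (n (k + 1)) := hb
  have hker : LinearMap.range (eilenberg R M g) ≤ LinearMap.ker (Phi R M g i₀ n) := by
    rintro _ ⟨y, rfl⟩
    exact phi_eilenberg R M g i₀ n y
  set φ := Submodule.liftQ (LinearMap.range (eilenberg R M g)) (Phi R M g i₀ n) hker with hφdef
  have hφmk : ∀ x : (i : ℕ) → M i,
      φ (Submodule.Quotient.mk x) = Phi R M g i₀ n x := fun x => rfl
  rcases hR with hF | ⟨hRc, hdom, _⟩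
  · -- Field case: rank argument using Erdős–Kaplansky
    letI : Field R := hF.toField
    set aE := aElt R M g i₀ n b with haE
    set L := (Phi R M g i₀ n).comp (Xmap R M i₀ n b) with hLdef
    set V : Submodule R ((ℕ → R) × M i₀) :=
      { carrier := {p | ∀ j : ℕ,
          (∑ k ∈ Finset.range j, p.1 k • aE k) - p.2 ∈ ATow R M g i₀ (n j)}
        add_mem' := by
          intro p q hp hq j
          have e : (∑ k ∈ Finset.range j, (p + q).1 k • aE k) - (p + q).2
              = ((∑ k ∈ Finset.range j, p.1 k • aE k) - p.2)
                + ((∑ k ∈ Finset.range j, q.1 k • aE k) - q.2) := by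
            simp only [Prod.fst_add, Pi.add_apply, add_smul, Finset.sum_add_distrib,
              Prod.snd_add]
            abel
          rw [e]
          exact Submodule.add_mem _ (hp j) (hq j)
        zero_mem' := by intro j; simp
        smul_mem' := by
          intro c p hp j
          have e : (∑ k ∈ Finset.range j, (c • p).1 k • aE k) - (c • p).2
              = c • ((∑ k ∈ Finset.range j, p.1 k • aE k) - p.2) := by
            simp only [Prod.smul_fst, Pi.smul_apply, smul_eq_mul, mul_smul, Prod.smul_snd,
              smul_sub, Finset.smul_sum]
          rw [e]
          exact Submodule.smul_mem _ c (hp j) } with hVdef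
    have hmemV : ∀ p : (ℕ → R) × M i₀, p ∈ V ↔ ∀ j : ℕ,
        (∑ k ∈ Finset.range j, p.1 k • aE k) - p.2 ∈ ATow R M g i₀ (n j) :=
      fun p => Iff.rfl
    have hkermap : LinearMap.ker L ≤ Submodule.map (LinearMap.fst R (ℕ → R) (M i₀)) V := by
      intro t ht
      rw [LinearMap.mem_ker] at ht
      have h0 : Phi R M g i₀ n (Xmap R M i₀ n b t)
          = Phi R M g i₀ n (Xmap R M i₀ n b 0) := by
        rw [map_zero, map_zero]
        exact ht
      obtain ⟨a, ha⟩ := (phi_eq_iff R M g i₀ n _ _).mp h0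
      refine ⟨(t, a), (hmemV (t, a)).mpr fun j => ?_, rfl⟩
      have haj := ha j
      rw [map_zero, map_zero, sub_zero, sMap_Xmap R M g i₀ n b hnmono] at haj
      exact haj
    set W := (LinearMap.snd R (ℕ → R) (M i₀)).comp V.subtype with hWdef
    have hWinj : Function.Injective W := by
      intro v v' hvv
      have hsub : ((v : (ℕ → R) × M i₀) - (v' : (ℕ → R) × M i₀)) ∈ V :=
        Submodule.sub_mem _ v.2 v'.2
      have h2 : (v : (ℕ → R) × M i₀).2 = (v' : (ℕ → R) × M i₀).2 := hvv
      have hzero : ∀ k, ((v : (ℕ → R) × M i₀).1 k - (v' : (ℕ → R) × M i₀).1 k) = 0 := by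
        apply vanish R M g i₀ n aE
          (fun k => (v : (ℕ → R) × M i₀).1 k - (v' : (ℕ → R) × M i₀).1 k)
        · intro j
          have h3 := (hmemV _).mp hsub j
          simpa [h2] using h3
        · intro k hk
          by_contra hc0
          apply hbA k
          have : aE k = ((v : (ℕ → R) × M i₀).1 k - (v' : (ℕ → R) × M i₀).1 k)⁻¹ •
              (((v : (ℕ → R) × M i₀).1 k - (v' : (ℕ → R) × M i₀).1 k) • aE k) := by
            rw [smul_smul, inv_mul_cancel₀ hc0, one_smul]
          rw [haE] at this ⊢
          rw [this]
          exact Submodule.smul_mem _ _ hk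
      apply Subtype.ext
      apply Prod.ext
      · funext k
        exact sub_eq_zero.mp (hzero k)
      · exact h2
    have hrk1 : Module.rank R (LinearMap.ker L) ≤ Cardinal.aleph0 :=
      le_trans (Submodule.rank_mono hkermap) (le_trans (rank_map_le _ _)
        (le_trans (LinearMap.rank_le_of_injective _ hWinj) (auxRankLeOfCG R _ (hcg i₀))))
    have hrangeφ : LinearMap.range L ≤ LinearMap.range φ := by
      rintro _ ⟨t, rfl⟩
      exact ⟨Submodule.Quotient.mk (Xmap R M i₀ n b t), hφmk _⟩
    have hrk2 : Module.rank R (LinearMap.range L) ≤ Cardinal.aleph0 :=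
      le_trans (Submodule.rank_mono hrangeφ)
        (le_trans (rank_range_le φ) (auxRankLeOfCG R _ hcgd))
    have hsum := LinearMap.rank_range_add_rank_ker L
    have hall : Module.rank R (ℕ → R) ≤ Cardinal.aleph0 := by
      rw [← hsum]
      exact le_trans (add_le_add hrk2 hrk1) (le_of_eq Cardinal.aleph0_add_aleph0)
    have hbig : Cardinal.aleph0 < Module.rank R (ℕ → R) := by
      rw [rank_fun_infinite]
      calc Cardinal.aleph0 < 2 ^ Cardinal.aleph0 := Cardinal.cantor _
        _ ≤ (Cardinal.mk R) ^ Cardinal.aleph0 := by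
            apply Cardinal.power_le_power_right
            rw [Cardinal.two_le_iff]
            exact exists_pair_ne R
        _ = Cardinal.mk (ℕ → R) := by rw [← Cardinal.mk_nat, Cardinal.power_def]
    exact absurd hall (not_le.mpr hbig)
  · -- Countable ring case: cardinality argument
    haveI : Countable R := hRc
    haveI : Nontrivial R := hdom.toNontrivial
    haveI hDC : Countable (derivedLim R M g) := auxCountableOfCG R _ hcgd
    haveI hMc : Countable (M i₀) := auxCountableOfCG R _ (hcg i₀)
    set σ : (ℕ → Bool) → (ℕ → R) := fun t k => if t k then 1 else 0 with hσ
    set F : (ℕ → Bool) → derivedLim R M g :=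
      fun t => Submodule.Quotient.mk (Xmap R M i₀ n b (σ t)) with hFdef
    have hrepex : ∀ t, ∃ s, F s = F t := fun t => ⟨t, rfl⟩
    set rep : derivedLim R M g → (ℕ → Bool) :=
      fun q => if h : ∃ s, F s = q then h.choose else fun _ => false with hrepdef
    have hrepF : ∀ t, F (rep (F t)) = F t := by
      intro t
      have h : ∃ s, F s = F t := hrepex t
      rw [hrepdef]
      simp only [dif_pos h]
      exact h.choose_spec
    have hPhieq : ∀ t, Phi R M g i₀ n (Xmap R M i₀ n b (σ t))
        = Phi R M g i₀ n (Xmap R M i₀ n b (σ (rep (F t)))) := by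
      intro t
      calc Phi R M g i₀ n (Xmap R M i₀ n b (σ t)) = φ (F t) := (hφmk _).symm
        _ = φ (F (rep (F t))) := congrArg φ (hrepF t).symm
        _ = Phi R M g i₀ n (Xmap R M i₀ n b (σ (rep (F t)))) := hφmk _
    have hwit : ∀ t, ∃ a : M i₀, ∀ j,
        sMap R M g i₀ (n j) (Xmap R M i₀ n b (σ t))
          - sMap R M g i₀ (n j) (Xmap R M i₀ n b (σ (rep (F t)))) - a
          ∈ ATow R M g i₀ (n j) :=
      fun t => (phi_eq_iff R M g i₀ n _ _).mp (hPhieq t)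
    choose w hw using hwit
    have hinj : Function.Injective (fun t => (F t, w t)) := by
      intro t t' hJ
      rw [Prod.mk.injEq] at hJ
      obtain ⟨hFt, hwt⟩ := hJ
      have hcdiff : ∀ j, (∑ k ∈ Finset.range j,
          (σ t k - σ t' k) • aElt R M g i₀ n b k) ∈ ATow R M g i₀ (n j) := by
        intro j
        have d1 := hw t j
        have d2 := hw t' j
        rw [← hFt, ← hwt] at d2
        have h3 := Submodule.sub_mem _ d1 d2
        have e : (sMap R M g i₀ (n j) (Xmap R M i₀ n b (σ t))
              - sMap R M g i₀ (n j) (Xmap R M i₀ n b (σ (rep (F t)))) - w t)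
            - (sMap R M g i₀ (n j) (Xmap R M i₀ n b (σ t'))
              - sMap R M g i₀ (n j) (Xmap R M i₀ n b (σ (rep (F t)))) - w t)
            = sMap R M g i₀ (n j) (Xmap R M i₀ n b (σ t))
              - sMap R M g i₀ (n j) (Xmap R M i₀ n b (σ t')) := by abel
        rw [e, sMap_Xmap R M g i₀ n b hnmono, sMap_Xmap R M g i₀ n b hnmono,
          ← Finset.sum_sub_distrib] at h3
        have e2 : ∀ k, σ t k • aElt R M g i₀ n b k - σ t' k • aElt R M g i₀ n b k
            = (σ t k - σ t' k) • aElt R M g i₀ n b k := fun k => (sub_smul _ _ _).symm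
        simpa only [e2] using h3
      have hzero : ∀ k, σ t k - σ t' k = 0 := by
        apply vanish R M g i₀ n (aElt R M g i₀ n b) (fun k => σ t k - σ t' k) hcdiff
        intro k hk
        cases ht : t k <;> cases ht' : t' k
        · simp [hσ, ht, ht']
        · exfalso
          apply hbA k
          have : -(aElt R M g i₀ n b k) ∈ ATow R M g i₀ (n (k + 1)) := by
            simpa [hσ, ht, ht'] using hk
          simpa using neg_mem this
        · exfalso
          apply hbA k
          simpa [hσ, ht, ht'] using hk
        · simp [hσ, ht, ht']
      funext k
      have h0 := hzero k
      simp only [hσ] at h0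
      cases ht : t k <;> cases ht' : t' k
      · rfl
      · exfalso; rw [ht, ht'] at h0; simp at h0
      · exfalso; rw [ht, ht'] at h0; simp at h0
      · rfl
    haveI : Countable (ℕ → Bool) := hinj.countable
    exact auxNotCountableNatBool this
end

section
/- Let R be a commutative ring that is either a field or a countable principal ideal domain, and let (M_i, g_i) be an inverse sequence of countably generated R-modules. Then lim¹ M_i = 0 if and only if (M_i) satisfies the Mittag-Leffler condition. -/
section
variable (R : Type) [CommRing R] (M : ℕ → Type) [∀ i, AddCommGroup (M i)]
  [∀ i, Module R (M i)]

def emod {a b : ℕ} (h : a = b) : M a ≃ₗ[R] M b := by subst h; exact LinearEquiv.refl R (M a)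

@[simp] lemma emod_rfl {a : ℕ} (h : a = a) (x : M a) : emod R M h x = x := rfl

lemma emod_apply_fun (x : ∀ n, M n) {a b : ℕ} (h : a = b) : emod R M h (x a) = x b := by
  subst h; rfl

@[simp] lemma emod_emod {a b : ℕ} (h : a = b) (h' : b = a) (x : M a) :
    emod R M h' (emod R M h x) = x := by subst h; rfl

variable (g : ∀ i : ℕ, M (i + 1) →ₗ[R] M i)

lemma g_emod {a b : ℕ} (h : a = b) (h' : a + 1 = b + 1) (x : M (a+1)) :
    g b (emod R M h' x) = emod R M h (g a x) := by subst h; rfl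

lemma tdl (j i : ℕ) : ∀ (x : M (i + 1 + j)),
    transDown R M g i (j+1) (emod R M (by omega) x) = g i (transDown R M g (i+1) j x) := by
  induction j with
  | zero => intro x; simp [transDown]
  | succ j ih =>
      intro x
      have key : g (i + (j+1)) (emod R M (by omega : i+1+(j+1) = i+(j+1)+1) x)
          = emod R M (by omega : i+1+j = i+(j+1)) (g (i+1+j) x) :=
        g_emod R M g (a := i+1+j) (b := i+(j+1)) (by omega) (by omega) x
      calc transDown R M g i (j+1+1) (emod R M (by omega) x)
          = transDown R M g i (j+1) (g (i+(j+1)) (emod R M (by omega) x)) := rfl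
        _ = transDown R M g i (j+1) (emod R M (by omega) (g (i+1+j) x)) := by rw [key]
        _ = g i (transDown R M g (i+1) j (g (i+1+j) x)) := ih _
        _ = g i (transDown R M g (i+1) (j+1) x) := rfl

lemma tdl' (j i : ℕ) (x : M (i + (j+1))) :
    transDown R M g i (j+1) x =
      g i (transDown R M g (i+1) j (emod R M (by omega : i + (j+1) = i+1+j) x)) := by
  conv_lhs => rw [show x = emod R M (by omega : i+1+j = i+(j+1))
    (emod R M (by omega : i + (j+1) = i+1+j) x) from (emod_emod R M _ _ x).symm]
  exact tdl R M g j i _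

lemma range_td_succ (i j : ℕ) :
    LinearMap.range (transDown R M g i (j+1)) =
      (LinearMap.range (transDown R M g (i+1) j)).map (g i) := by
  ext m
  simp only [LinearMap.mem_range, Submodule.mem_map]
  constructor
  · rintro ⟨x, rfl⟩
    exact ⟨transDown R M g (i+1) j (emod R M (by omega) x), ⟨_, rfl⟩, (tdl' R M g j i x).symm⟩
  · rintro ⟨-, ⟨x, rfl⟩, rfl⟩
    exact ⟨emod R M (by omega : i+1+j = i + (j+1)) x, by rw [tdl' R M g j i]; simp⟩

lemma range_td_anti (i : ℕ) {j j' : ℕ} (h : j ≤ j') :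
    LinearMap.range (transDown R M g i j') ≤ LinearMap.range (transDown R M g i j) := by
  obtain ⟨k, rfl⟩ := Nat.le.dest h
  clear h
  induction k with
  | zero => exact le_rfl
  | succ k ih =>
      refine le_trans ?_ ih
      show LinearMap.range ((transDown R M g i (j+k)).comp (g (i+(j+k)))) ≤ _
      exact LinearMap.range_comp_le_range _ _

lemma ml_surj (hml : MittagLeffler R M g) : Function.Surjective (eilenberg R M g) := by
  classical
  intro b
  choose j₀ hj₀ using hml
  set N : ∀ i, Submodule R (M i) := fun i => LinearMap.range (transDown R M g i (j₀ i)) with hN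
  have hNeq : ∀ i m, j₀ i ≤ m → LinearMap.range (transDown R M g i m) = N i := by
    intro i m hm
    obtain ⟨k, rfl⟩ := Nat.le.dest hm
    exact hj₀ i k
  have hNle : ∀ i m, N i ≤ LinearMap.range (transDown R M g i m) := by
    intro i m
    rcases le_total (j₀ i) m with h | h
    · rw [hNeq i m h]
    · exact range_td_anti R M g i h
  have hsur : ∀ i (n : M i), n ∈ N i → ∃ n', n' ∈ N (i+1) ∧ g i n' = n := by
    intro i n hn
    obtain ⟨m', hm'⟩ : ∃ m', max (j₀ i) (j₀ (i+1) + 1) = m' + 1 :=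
      ⟨max (j₀ i) (j₀ (i+1) + 1) - 1, by omega⟩
    have h1 : n ∈ LinearMap.range (transDown R M g i (m' + 1)) := by
      rw [hNeq i (m'+1) (by omega)]; exact hn
    rw [range_td_succ] at h1
    obtain ⟨y, hy, hgy⟩ := h1
    exact ⟨y, by rwa [hNeq (i+1) m' (by omega)] at hy, hgy⟩
  -- the cutoff function
  set K : ℕ → ℕ := fun i => 1 + (Finset.range (i+1)).sup j₀ with hK
  have hKj : ∀ i, j₀ i < K i := by
    intro i
    have h1 := Finset.le_sup (f := j₀) (Finset.self_mem_range_succ i)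
    have h2 : K i = 1 + (Finset.range (i+1)).sup j₀ := rfl
    omega
  have hKmono : ∀ i, K i ≤ K (i+1) := by
    intro i
    have h1 := Finset.sup_mono (f := j₀) (Finset.range_subset_range.2 (by omega : i+1 ≤ i+2))
    have h2 : K i = 1 + (Finset.range (i+1)).sup j₀ := rfl
    have h3 : K (i+1) = 1 + (Finset.range (i+2)).sup j₀ := rfl
    omega
  set t : ∀ i, ℕ → M i := fun i j => transDown R M g i j (b (i+j)) with ht
  set s : ∀ i, M i := fun i => ∑ j ∈ Finset.range (K i), t i j with hs
  have hterm : ∀ i j, t i (j+1) = g i (t (i+1) j) := by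
    intro i j
    show transDown R M g i (j+1) (b (i+(j+1))) = g i (transDown R M g (i+1) j (b (i+1+j)))
    rw [tdl' R M g j i (b (i+(j+1)))]
    congr 1
    congr 1
    rw [emod_apply_fun]
  have hgs : ∀ i, g i (s (i+1)) = (∑ j ∈ Finset.range (K (i+1) + 1), t i j) - t i 0 := by
    intro i
    have : g i (s (i+1)) = ∑ j ∈ Finset.range (K (i+1)), g i (t (i+1) j) := by
      show g i (∑ j ∈ Finset.range (K (i+1)), t (i+1) j) = _
      rw [map_sum]
    rw [this, Finset.sum_range_succ' (fun j => t i j) (K (i+1))]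
    simp only [add_sub_cancel_right]
    exact Finset.sum_congr rfl fun j _ => (hterm i j).symm
  have ht0 : ∀ i, t i 0 = b i := fun i => rfl
  set c : ∀ i, M i := fun i => s i - g i (s (i+1)) - b i with hc
  have hcmem : ∀ i, c i ∈ N i := by
    intro i
    have hceq : c i = -∑ j ∈ Finset.Ico (K i) (K (i+1) + 1), t i j := by
      show s i - g i (s (i+1)) - b i = _
      rw [hgs, ht0, Finset.sum_Ico_eq_sub _ (by have := hKmono i; omega)]
      have hsi : s i = ∑ j ∈ Finset.range (K i), t i j := rfl
      rw [hsi]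
      abel
    rw [hceq]
    refine neg_mem (Submodule.sum_mem _ ?_)
    intro j hj
    rw [Finset.mem_Ico] at hj
    have hmem : t i j ∈ LinearMap.range (transDown R M g i j) := ⟨b (i+j), rfl⟩
    rw [hNeq i j (le_trans (le_of_lt (hKj i)) hj.1)] at hmem
    exact hmem
  -- recursively solve within N
  set step : ∀ i, {x : M i // x ∈ N i} → {x : M (i+1) // x ∈ N (i+1)} := fun i prev =>
    ⟨(hsur i (prev.1 - c i) (sub_mem prev.2 (hcmem i))).choose,
     (hsur i (prev.1 - c i) (sub_mem prev.2 (hcmem i))).choose_spec.1⟩ with hstep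
  set W : ∀ i, {x : M i // x ∈ N i} := fun i => Nat.rec ⟨0, zero_mem _⟩ step i with hWdef
  have hW : ∀ i, g i (W (i+1)).1 = (W i).1 - c i := by
    intro i
    exact (hsur i ((W i).1 - c i) (sub_mem (W i).2 (hcmem i))).choose_spec.2
  refine ⟨fun i => s i - (W i).1, ?_⟩
  funext i
  show s i - (W i).1 - g i (s (i+1) - (W (i+1)).1) = b i
  rw [map_sub, hW]
  have hc2 : c i = s i - g i (s (i+1)) - b i := rfl
  rw [hc2]
  abel
end

section core
variable {R : Type} [CommRing R] {N : Type} [AddCommGroup N] [Module R N]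

open Finset in
/-- Auxiliary: the "series term" family supported on the range of `p`. -/
private noncomputable def bfun (p : ℕ → ℕ) (d : ℕ → N) (c : ℕ → R) (j : ℕ) : N :=
  ∑ k ∈ (Finset.range (j+1)).filter (fun k => p k = j), c k • d k

private lemma bfun_mem (A : ℕ → Submodule R N) {p : ℕ → ℕ} {d : ℕ → N}
    (hd : ∀ k, d k ∈ A (p k)) (c : ℕ → R) (j : ℕ) : bfun p d c j ∈ A j := by
  refine Submodule.sum_mem _ fun k hk => ?_
  rw [Finset.mem_filter] at hk
  exact Submodule.smul_mem _ _ (hk.2 ▸ hd k)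

private lemma bfun_sum {p : ℕ → ℕ} (hp : StrictMono p) (d : ℕ → N) (c : ℕ → R) (K : ℕ) :
    ∑ j ∈ Finset.range (p (K+1)), bfun p d c j = ∑ k ∈ Finset.range (K+1), c k • d k := by
  rw [← Finset.sum_fiberwise_of_maps_to (g := p)
    (fun k hk => Finset.mem_range.2 (hp (Finset.mem_range.1 hk))) (fun k => c k • d k)]
  refine Finset.sum_congr rfl fun j hj => ?_
  rw [Finset.mem_range] at hj
  refine Finset.sum_congr ?_ (fun _ _ => rfl)
  ext k
  simp only [Finset.mem_filter, Finset.mem_range]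
  constructor
  · rintro ⟨hk1, hk2⟩
    refine ⟨?_, hk2⟩
    have h2 : p k < p (K+1) := hk2 ▸ hj
    have := hp.lt_iff_lt.1 h2
    omega
  · rintro ⟨hk1, hk2⟩
    refine ⟨?_, hk2⟩
    have : k ≤ p k := hp.le_apply
    omega

private lemma bfun_sub (p : ℕ → ℕ) (d : ℕ → N) (c c' : ℕ → R) (j : ℕ) :
    bfun p d c j - bfun p d c' j = bfun p d (fun k => c k - c' k) j := by
  unfold bfun
  rw [← Finset.sum_sub_distrib]
  exact Finset.sum_congr rfl fun k _ => (sub_smul _ _ _).symm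

private lemma bfun_smul_sum (p : ℕ → ℕ) (d : ℕ → N) (s : Finset R) (lam : R → R)
    (cf : R → ℕ → R) (j : ℕ) :
    ∑ u ∈ s, lam u • bfun p d (cf u) j = bfun p d (fun k => ∑ u ∈ s, lam u * cf u k) j := by
  unfold bfun
  calc ∑ u ∈ s, lam u • ∑ k ∈ (Finset.range (j+1)).filter (fun k => p k = j), cf u k • d k
      = ∑ u ∈ s, ∑ k ∈ (Finset.range (j+1)).filter (fun k => p k = j),
          (lam u * cf u k) • d k := by
        refine Finset.sum_congr rfl fun u _ => ?_
        rw [Finset.smul_sum]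
        exact Finset.sum_congr rfl fun k _ => smul_smul _ _ _
    _ = ∑ k ∈ (Finset.range (j+1)).filter (fun k => p k = j),
          ∑ u ∈ s, (lam u * cf u k) • d k := Finset.sum_comm
    _ = _ := Finset.sum_congr rfl fun k _ => by rw [← Finset.sum_smul]

private lemma telescope_sum (w b : ℕ → N) (hw : ∀ j, w j - w (j+1) = b j) :
    ∀ m, w 0 - w m = ∑ j ∈ Finset.range m, b j := by
  intro m
  induction m with
  | zero => simp
  | succ m ih =>
      rw [Finset.sum_range_succ, ← ih, ← hw m]
      abel

/-- Core combinatorial lemma: if a decreasing sequence of submodules of `N` admits solutions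
of the Eilenberg-type equations but is not eventually constant, then `N` contains an injective
image of `ℕ → Bool` and (given Vandermonde-type independence and inverses) a linearly
independent family indexed by `R`. -/
private lemma core_not_const (A : ℕ → Submodule R N)
    (hanti : ∀ {j j' : ℕ}, j ≤ j' → A j' ≤ A j)
    (hsolv : ∀ b : ℕ → N, (∀ j, b j ∈ A j) →
      ∃ y : ℕ → N, (∀ j, y j ∈ A j) ∧ ∀ j, y j - y (j+1) = b j)
    (hnot : ∀ j, ∃ k, A (j + k) ≠ A j) :
    (∃ Φ : (ℕ → Bool) → N, Function.Injective Φ) ∧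
    ((∀ (s : Finset R) (lam : R → R),
        (∀ k : ℕ, ∑ t ∈ s, lam t * t ^ k = 0) → ∀ t ∈ s, lam t = 0) →
      (∀ a : R, a ≠ 0 → ∃ b, a * b = 1) →
      ∃ Φ : R → N, LinearIndependent R Φ) := by
  classical
  have hstep : ∀ j : ℕ, ∃ j', j < j' ∧ A j' < A j := by
    intro j
    obtain ⟨k, hk⟩ := hnot j
    have hk0 : k ≠ 0 := by rintro rfl; exact hk rfl
    exact ⟨j + k, by omega, lt_of_le_of_ne (hanti (Nat.le_add_right j k)) hk⟩
  let p : ℕ → ℕ := fun k => Nat.rec 0 (fun _ pk => (hstep pk).choose) k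
  have hplt : ∀ k, p k < p (k+1) := fun k => (hstep (p k)).choose_spec.1
  have hpA : ∀ k, A (p (k+1)) < A (p k) := fun k => (hstep (p k)).choose_spec.2
  have hpm : StrictMono p := strictMono_nat_of_lt_succ hplt
  have hdex : ∀ k, ∃ x, x ∈ A (p k) ∧ x ∉ A (p (k+1)) := by
    intro k
    obtain ⟨x, hx1, hx2⟩ := SetLike.exists_of_lt (hpA k)
    exact ⟨x, hx1, hx2⟩
  choose d hd1 hd2 using hdex
  have tel := telescope_sum (N := N)
  constructor
  · -- injection of `ℕ → Bool`
    have hy : ∀ ε : ℕ → Bool, ∃ y : ℕ → N, (∀ j, y j ∈ A j) ∧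
        ∀ j, y j - y (j+1) = bfun p d (fun k => if ε k then (1:R) else 0) j :=
      fun ε => hsolv _ (bfun_mem A hd1 _)
    choose y hy1 hy2 using hy
    refine ⟨fun ε => y ε 0, ?_⟩
    intro ε ε' hεε
    by_contra hne
    have hex : ∃ k, ε k ≠ ε' k := by
      by_contra h; push_neg at h; exact hne (funext h)
    set K := Nat.find hex with hK
    have h6 : ε K ≠ ε' K := Nat.find_spec hex
    set m := p (K+1) with hm
    have h1 := tel _ _ (hy2 ε) m
    have h2 := tel _ _ (hy2 ε') m
    set cB : (ℕ → Bool) → ℕ → R := fun ε k => if ε k then (1:R) else 0 with hcB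
    have h3 : y ε' m - y ε m = ∑ j ∈ Finset.range m, (bfun p d (cB ε) j - bfun p d (cB ε') j) := by
      have hee : y ε 0 = y ε' 0 := hεε
      rw [Finset.sum_sub_distrib, ← h1, ← h2, hee]
      abel
    have h4 : ∑ j ∈ Finset.range m, (bfun p d (cB ε) j - bfun p d (cB ε') j)
        = (cB ε K - cB ε' K) • d K := by
      calc ∑ j ∈ Finset.range m, (bfun p d (cB ε) j - bfun p d (cB ε') j)
          = ∑ j ∈ Finset.range m, bfun p d (fun k => cB ε k - cB ε' k) j :=
            Finset.sum_congr rfl fun j _ => bfun_sub p d _ _ j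
        _ = ∑ k ∈ Finset.range (K+1), (cB ε k - cB ε' k) • d k := bfun_sum hpm d _ K
        _ = (cB ε K - cB ε' K) • d K := by
            refine Finset.sum_eq_single_of_mem K (Finset.self_mem_range_succ K) ?_
            intro k hk hkK
            have hkK' : k < K := by rw [Finset.mem_range] at hk; omega
            have hkk : ε k = ε' k := by
              have := Nat.find_min hex hkK'
              exact not_not.1 this
            rw [hcB]
            simp [hkk]
    have h5 : (cB ε K - cB ε' K) • d K ∈ A m := by
      rw [← h4, ← h3]
      exact sub_mem (hy1 ε' m) (hy1 ε m)
    have h7 : d K ∈ A m := by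
      cases hεK : ε K <;> cases hε'K : ε' K
      · exact absurd (by rw [hεK, hε'K]) h6
      · have hco : cB ε K - cB ε' K = -1 := by rw [hcB]; simp [hεK, hε'K]
        rw [hco, neg_smul, one_smul] at h5
        exact neg_mem_iff.1 h5
      · have hco : cB ε K - cB ε' K = 1 := by rw [hcB]; simp [hεK, hε'K]
        rw [hco, one_smul] at h5
        exact h5
      · exact absurd (by rw [hεK, hε'K]) h6
    exact hd2 K h7
  · -- linearly independent family indexed by `R`
    intro hvan hinv
    have hy : ∀ t : R, ∃ y : ℕ → N, (∀ j, y j ∈ A j) ∧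
        ∀ j, y j - y (j+1) = bfun p d (fun k => t ^ k) j :=
      fun t => hsolv _ (bfun_mem A hd1 _)
    choose y hy1 hy2 using hy
    refine ⟨fun t => y t 0, ?_⟩
    rw [linearIndependent_iff']
    intro s lam hsum t ht
    set cS : ℕ → R := fun k => ∑ u ∈ s, lam u * u ^ k with hcS
    set w : ℕ → N := fun j => ∑ u ∈ s, lam u • y u j with hwdef
    have hw : ∀ j, w j - w (j+1) = bfun p d cS j := by
      intro j
      show (∑ u ∈ s, lam u • y u j) - (∑ u ∈ s, lam u • y u (j+1)) = _
      rw [← Finset.sum_sub_distrib]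
      have hterm : ∀ u ∈ s, lam u • y u j - lam u • y u (j+1)
          = lam u • bfun p d (fun k => u ^ k) j := by
        intro u _
        rw [← smul_sub, hy2 u j]
      rw [Finset.sum_congr rfl hterm, bfun_smul_sum p d s lam (fun u k => u ^ k) j]
    have hw0 : w 0 = 0 := hsum
    have hwm : ∀ j, w j ∈ A j := fun j =>
      Submodule.sum_mem _ fun u _ => Submodule.smul_mem _ _ (hy1 u j)
    have hcS0 : ∀ k, cS k = 0 := by
      by_contra hc
      push_neg at hc
      have hex : ∃ k, cS k ≠ 0 := hc
      set K := Nat.find hex with hK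
      set m := p (K+1) with hm
      have h1 := tel _ _ hw m
      rw [hw0, zero_sub] at h1
      have h4 : ∑ j ∈ Finset.range m, bfun p d cS j = cS K • d K := by
        rw [bfun_sum hpm d cS K]
        refine Finset.sum_eq_single_of_mem K (Finset.self_mem_range_succ K) ?_
        intro k hk hkK
        have hkK' : k < K := by rw [Finset.mem_range] at hk; omega
        have := Nat.find_min hex hkK'
        rw [not_not.1 this, zero_smul]
      have h5 : cS K • d K ∈ A m := by
        rw [← h4, h1.symm]
        exact neg_mem (hwm m)
      obtain ⟨u, hu⟩ := hinv (cS K) (Nat.find_spec hex)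
      have h8 := Submodule.smul_mem _ u h5
      rw [smul_smul, mul_comm u (cS K), hu, one_smul] at h8
      exact hd2 K h8
    exact hvan s lam (fun k => hcS0 k) t ht

end core

/-- Vandermonde-type independence of power functions over a field. -/
private lemma vandermonde_power_indep {F : Type} [Field F] (s : Finset F) (lam : F → F)
    (h : ∀ k : ℕ, ∑ t ∈ s, lam t * t ^ k = 0) : ∀ t ∈ s, lam t = 0 := by
  classical
  set n := s.card with hn
  set e := s.equivFin with he
  set v : Fin n → F := fun i => (e.symm i : F) with hv
  have hvinj : Function.Injective v := by
    intro i i' hii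
    exact e.symm.injective (Subtype.ext hii)
  have hzero : (fun i : Fin n => lam (v i)) = 0 := by
    refine Matrix.eq_zero_of_forall_pow_sum_mul_pow_eq_zero hvinj ?_
    intro i
    calc ∑ j : Fin n, lam (v j) * v j ^ (i : ℕ)
        = ∑ x : ↥s, lam (v (e x)) * v (e x) ^ (i : ℕ) := (Equiv.sum_comp e _).symm
      _ = ∑ x : ↥s, lam (x : F) * (x : F) ^ (i : ℕ) := by
          refine Finset.sum_congr rfl fun x _ => ?_
          rw [show v (e x) = (x : F) by rw [hv]; simp]
      _ = ∑ t ∈ s, lam t * t ^ (i : ℕ) := Finset.sum_coe_sort s (fun t => lam t * t ^ (i : ℕ))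
      _ = 0 := h _
  intro t ht
  have := congrFun hzero (e ⟨t, ht⟩)
  simpa [hv] using this

section
variable (R : Type) [CommRing R] (M : ℕ → Type) [∀ i, AddCommGroup (M i)]
  [∀ i, Module R (M i)] (g : ∀ i : ℕ, M (i + 1) →ₗ[R] M i)

lemma surj_solv (hs : Function.Surjective (eilenberg R M g)) (i : ℕ)
    (b : ℕ → M i) (hb : ∀ j, b j ∈ LinearMap.range (transDown R M g i j)) :
    ∃ y : ℕ → M i, (∀ j, y j ∈ LinearMap.range (transDown R M g i j)) ∧
      ∀ j, y j - y (j+1) = b j := by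
  classical
  choose mm hmm using hb
  obtain ⟨x, hx⟩ := hs (fun n =>
    if h : i ≤ n then emod R M (by omega : i + (n - i) = n) (mm (n-i)) else 0)
  refine ⟨fun j => transDown R M g i j (x (i+j)), fun j => ⟨x (i+j), rfl⟩, ?_⟩
  intro j
  have h1 : transDown R M g i (j+1) (x (i+(j+1))) = transDown R M g i j (g (i+j) (x (i+j+1))) := rfl
  have h2 : x (i+j) - g (i+j) (x (i+j+1)) =
      (if h : i ≤ i+j then emod R M (by omega : i + (i+j-i) = i+j) (mm (i+j-i)) else 0) :=
    congrFun hx (i+j)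
  have h3 : ∀ k (hk : k = j) (hik : i + k = i + j),
      transDown R M g i j (emod R M hik (mm k)) = b j := by
    intro k hk
    subst hk
    intro hik
    rw [emod_rfl]
    exact hmm k
  calc transDown R M g i j (x (i+j)) - transDown R M g i (j+1) (x (i+(j+1)))
      = transDown R M g i j (x (i+j) - g (i+j) (x (i+j+1))) := by rw [h1, map_sub]
    _ = transDown R M g i j (emod R M (by omega : i + (i+j-i) = i+j) (mm (i+j-i))) := by
        rw [h2, dif_pos (Nat.le_add_right i j)]
    _ = b j := h3 (i+j-i) (by omega) _

end

/-- Let `R` be a field or a countable PID, and let `(Mᵢ, gᵢ)` be an inverse sequence of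
countably generated `R`-modules.  Then `lim¹ Mᵢ = 0` if and only if `(Mᵢ)` satisfies the
Mittag-Leffler condition. -/
theorem derivedLim_eq_zero_iff_mittagLeffler
    (R : Type) [CommRing R]
    (hR : IsField R ∨ (Countable R ∧ IsDomain R ∧ IsPrincipalIdealRing R))
    (M : ℕ → Type) [∀ i, AddCommGroup (M i)] [∀ i, Module R (M i)]
    (g : ∀ i : ℕ, M (i + 1) →ₗ[R] M i)
    (hcg : ∀ i : ℕ, CountablyGeneratedMod R (M i)) :
    Subsingleton (derivedLim R M g) ↔ MittagLeffler R M g := by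
  classical
  constructor
  · intro hss
    have hsurj : Function.Surjective (eilenberg R M g) :=
      LinearMap.range_eq_top.1 (Submodule.Quotient.subsingleton_iff.1 hss)
    intro i
    by_contra hnot
    push_neg at hnot
    have hanti : ∀ {j j' : ℕ}, j ≤ j' →
        LinearMap.range (transDown R M g i j') ≤ LinearMap.range (transDown R M g i j) :=
      fun h => range_td_anti R M g i h
    have hsolv := surj_solv R M g hsurj i
    have core := core_not_const (fun j => LinearMap.range (transDown R M g i j))
      hanti hsolv hnot
    by_cases hcnt : Countable R
    · obtain ⟨S, hSc, hSspan⟩ := hcg i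
      haveI hScnt : Countable ↥S := hSc.to_subtype
      have hsurj2 : Function.Surjective
          (Finsupp.linearCombination R (fun x : ↥S => (x : M i))) := by
        rw [← LinearMap.range_eq_top, Finsupp.range_linearCombination, Subtype.range_coe]
        exact hSspan
      haveI hMc : Countable (M i) := hsurj2.countable
      obtain ⟨Φ, hΦ⟩ := core.1
      haveI hcntB : Countable (ℕ → Bool) := hΦ.countable
      obtain ⟨f, hf⟩ := exists_injective_nat (ℕ → Bool)
      refine Function.cantor_injective (fun s : Set ℕ => f fun n => decide (n ∈ s)) ?_
      intro s t hst
      ext n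
      have h2 := congrFun (hf hst) n
      simpa [decide_eq_decide] using h2
    · have hfield : IsField R := by
        rcases hR with h | ⟨h1, _, _⟩
        · exact h
        · exact absurd h1 hcnt
      letI : Field R := hfield.toField
      obtain ⟨Φ, hΦ⟩ := core.2
        (fun s lam h t ht => vandermonde_power_indep s lam h t ht)
        (fun a ha => hfield.mul_inv_cancel ha)
      obtain ⟨S, hSc, hSspan⟩ := hcg i
      have h4 : Module.rank R (⊤ : Submodule R (M i)) ≤ Cardinal.mk ↥S :=
        hSspan ▸ rank_span_le (R := R) S
      have h5 : Module.rank R (M i) ≤ Cardinal.mk ↥S := by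
        rw [← rank_top R (M i)]; exact h4
      have h6 : Cardinal.mk R ≤ Module.rank R (M i) := hΦ.cardinal_le_rank
      have h7 : Cardinal.mk R ≤ Cardinal.aleph0 :=
        h6.trans (h5.trans (Cardinal.mk_le_aleph0_iff.2 hSc.to_subtype))
      exact hcnt (Cardinal.mk_le_aleph0_iff.1 h7)
  · intro hml
    rw [Submodule.Quotient.subsingleton_iff]
    exact LinearMap.range_eq_top.2 (ml_surj R M g hml)
end

section
/- Let R be a commutative ring that is either a field or a countable principal ideal domain, and let (M_i, g_i) be an inverse sequence of countably generated R-modules. Then the derived limit lim¹ M_i is either the zero module or is not a countably generated R-module. -/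
namespace DLaux

open LinearMap Submodule Finset Cardinal

variable {R : Type} [CommRing R] {M : ℕ → Type} [∀ i, AddCommGroup (M i)]
  [∀ i, Module R (M i)] (g : ∀ i : ℕ, M (i + 1) →ₗ[R] M i)

theorem trans_g_apply (y : ∀ n, M n) (i : ℕ) :
    ∀ k, g i (transDown R M g (i+1) k (y (i+1+k))) = transDown R M g i (k+1) (y (i+(k+1)))
  | 0 => by simp [transDown]
  | k+1 => by
    have ih := trans_g_apply (fun n => g n (y (n+1))) i k
    simp [transDown] at ih ⊢
    exact ih

/-- images `B i j = range (f_i^{i+j})` -/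
noncomputable def B (i j : ℕ) : Submodule R (M i) := LinearMap.range (transDown R M g i j)

theorem B_succ_le (i j : ℕ) : B g i (j+1) ≤ B g i j := by
  rintro x ⟨m, rfl⟩
  exact ⟨g (i+j) m, rfl⟩

theorem B_le (i : ℕ) : ∀ j k, B g i (j + k) ≤ B g i j
  | _, 0 => le_rfl
  | j, k+1 => le_trans (B_succ_le g i (j+k)) (B_le i j k)

theorem B_antitone {i j j' : ℕ} (h : j ≤ j') : B g i j' ≤ B g i j := by
  obtain ⟨k, rfl⟩ := Nat.exists_eq_add_of_le h
  exact B_le g i j k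

/-- the auxiliary "delta function" -/
noncomputable def dfun (n₀ : ℕ) (x : M n₀) : ∀ n, M n := fun n =>
  if h : n₀ = n then h ▸ x else 0

theorem dfun_self (n₀ : ℕ) (x : M n₀) : dfun n₀ x n₀ = x := by
  simp [dfun]

theorem B_succ_eq_map (i : ℕ) : ∀ j, B g i (j+1) = Submodule.map (g i) (B g (i+1) j) := by
  intro j
  apply le_antisymm
  · rintro x ⟨m, rfl⟩
    have h := trans_g_apply g (dfun (i+(j+1)) m) i j
    rw [dfun_self] at h
    exact ⟨transDown R M g (i+1) j (dfun (i+(j+1)) m (i+1+j)), ⟨_, rfl⟩, h⟩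
  · rintro x ⟨m, ⟨z, rfl⟩, rfl⟩
    have h := trans_g_apply g (dfun (i+1+j) z) i j
    rw [dfun_self] at h
    exact ⟨dfun (i+1+j) z (i+(j+1)), h.symm⟩

end DLaux

namespace DLaux

variable {R : Type} [CommRing R] {M : ℕ → Type} [∀ i, AddCommGroup (M i)]
  [∀ i, Module R (M i)] (g : ∀ i : ℕ, M (i + 1) →ₗ[R] M i)

theorem surj_of_ml (hml : MittagLeffler R M g) :
    LinearMap.range (eilenberg R M g) = ⊤ := by
  classical
  -- stabilization indices
  choose jml hjml using hml
  -- N i : the stable image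
  set N : ∀ i, Submodule R (M i) := fun i => B g i (jml i) with hN
  have hBN : ∀ i j, jml i ≤ j → B g i j = N i := by
    intro i j hj
    obtain ⟨k, rfl⟩ := Nat.exists_eq_add_of_le hj
    exact hjml i k
  have hsurj : ∀ i, Submodule.map (g i) (N (i+1)) = N i := by
    intro i
    have h1 : B g (i+1) (max (jml (i+1)) (jml i)) = N (i+1) :=
      hBN (i+1) _ (le_max_left _ _)
    have h2 : B g i (max (jml (i+1)) (jml i) + 1) = N i :=
      hBN i _ (le_trans (le_max_right _ _) (Nat.le_succ _))
    rw [← h1, ← B_succ_eq_map, h2]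
  rw [LinearMap.range_eq_top]
  intro y
  -- the cut function
  set c : ℕ → ℕ := fun i => (Finset.range (i+1)).sup jml with hc
  have hcmono : ∀ i, jml i ≤ c i := fun i =>
    Finset.le_sup (Finset.self_mem_range_succ i)
  have hcmono' : ∀ i, jml i ≤ c (i+1) := fun i =>
    Finset.le_sup (Finset.mem_range.mpr (by omega))
  -- first approximation
  set q : ∀ i, M i := fun i =>
    ∑ k ∈ Finset.range (c i), transDown R M g i k (y (i+k)) with hq
  have hr : ∀ i, y i - (q i - g i (q (i+1))) ∈ N i := by
    intro i
    set t : ℕ → M i := fun k => transDown R M g i k (y (i+k)) with ht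
    have hgq : g i (q (i+1)) = (∑ k ∈ Finset.range (c (i+1) + 1), t k) - t 0 := by
      rw [hq, map_sum]
      rw [Finset.sum_range_succ']
      simp only [add_sub_cancel_right]
      apply Finset.sum_congr rfl
      intro k _
      exact trans_g_apply g y i k
    have ht0 : t 0 = y i := rfl
    set b := max (c i) (c (i+1) + 1) with hb
    have h1 : ∑ k ∈ Finset.range b, t k
        = q i + ∑ k ∈ Finset.Ico (c i) b, t k := by
      rw [hq, ← ht, ← Finset.sum_range_add_sum_Ico t (le_max_left _ _)]
    have h2 : ∑ k ∈ Finset.range b, t k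
        = (∑ k ∈ Finset.range (c (i+1) + 1), t k) + ∑ k ∈ Finset.Ico (c (i+1) + 1) b, t k := by
      rw [← Finset.sum_range_add_sum_Ico t (le_max_right _ _)]
    have key : y i - (q i - g i (q (i+1)))
        = (∑ k ∈ Finset.Ico (c i) b, t k) - ∑ k ∈ Finset.Ico (c (i+1) + 1) b, t k := by
      rw [hgq, ht0]
      have e1 : q i = ∑ k ∈ Finset.range b, t k - ∑ k ∈ Finset.Ico (c i) b, t k := by
        rw [h1]; abel
      have e2 : ∑ k ∈ Finset.range (c (i+1) + 1), t k
          = ∑ k ∈ Finset.range b, t k - ∑ k ∈ Finset.Ico (c (i+1) + 1) b, t k := by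
        rw [h2]; abel
      rw [e1, e2]; abel
    rw [key]
    have hmem : ∀ (m : ℕ) (k : ℕ), jml i ≤ m → k ∈ Finset.Ico m b → t k ∈ N i := by
      intro m k hm hk
      have : jml i ≤ k := le_trans hm (Finset.mem_Ico.mp hk).1
      rw [← hBN i k this]
      exact ⟨y (i+k), rfl⟩
    exact sub_mem
      (Submodule.sum_mem _ (fun k hk => hmem (c i) k (hcmono i) hk))
      (Submodule.sum_mem _ (fun k hk => hmem (c (i+1) + 1) k (by have := hcmono' i; omega) hk))
  -- the residual
  set r : ∀ i, M i := fun i => y i - (q i - g i (q (i+1))) with hrdef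
  -- solve within the surjective tower N
  have step : ∀ i (v : M i), v ∈ N i →
      ∃ w : M (i+1), w ∈ N (i+1) ∧ g i w = v - r i := by
    intro i v hv
    have : v - r i ∈ Submodule.map (g i) (N (i+1)) := by
      rw [hsurj]
      exact sub_mem hv (hr i)
    exact Submodule.mem_map.mp this
  set x' : ∀ i, {v : M i // v ∈ N i} := fun i =>
    Nat.rec ⟨0, Submodule.zero_mem _⟩
      (fun i prev => ⟨(step i prev.1 prev.2).choose,
        (step i prev.1 prev.2).choose_spec.1⟩) i with hx'
  have hx'spec : ∀ i, g i (x' (i+1)).1 = (x' i).1 - r i := by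
    intro i
    exact (step i (x' i).1 (x' i).2).choose_spec.2
  refine ⟨fun i => q i + (x' i).1, ?_⟩
  funext i
  show (q i + (x' i).1) - g i (q (i+1) + (x' (i+1)).1) = y i
  rw [map_add, hx'spec i]
  simp only [hrdef]
  abel

end DLaux

namespace DLaux

section PartB

open Classical

variable {R : Type} [CommRing R] {M : ℕ → Type} [∀ i, AddCommGroup (M i)]
  [∀ i, Module R (M i)] (g : ∀ i : ℕ, M (i + 1) →ₗ[R] M i)
  (i₀ : ℕ) (jfun : ℕ → ℕ) (v : ∀ n, M (i₀ + jfun n))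

/-- Element of `∏ Mᵢ` with value `f n • v n` at position `i₀ + jfun n`, `0` elsewhere. -/
noncomputable def Yfun (f : ℕ → R) : ∀ i, M i := fun i =>
  if h : ∃ n, i₀ + jfun n = i then
    f h.choose • (_root_.cast (congrArg M h.choose_spec) (v h.choose)) else 0

theorem eilenberg_apply (x : ∀ i, M i) (i : ℕ) :
    eilenberg R M g x i = x i - g i (x (i+1)) := rfl

variable (hjmono : StrictMono jfun)
include hjmono

theorem Yfun_at (f : ℕ → R) (n : ℕ) :
    Yfun i₀ jfun v f (i₀ + jfun n) = f n • v n := by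
  have h : ∃ m, i₀ + jfun m = i₀ + jfun n := ⟨n, rfl⟩
  have key : ∀ (m : ℕ) (hm : i₀ + jfun m = i₀ + jfun n),
      f m • (_root_.cast (congrArg M hm) (v m)) = f n • v n := by
    intro m hm
    have hmn : m = n := hjmono.injective (Nat.add_left_cancel hm)
    subst hmn
    rfl
  unfold Yfun
  rw [dif_pos h]
  exact key h.choose h.choose_spec

omit hjmono in
theorem Yfun_off (f : ℕ → R) (i : ℕ) (h : ¬ ∃ n, i₀ + jfun n = i) :
    Yfun i₀ jfun v f i = 0 := dif_neg h

omit hjmono in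
/-- `Yfun` as a linear map. -/
noncomputable def Ymap : (ℕ → R) →ₗ[R] (∀ i, M i) where
  toFun := Yfun i₀ jfun v
  map_add' f f' := by
    funext i
    show Yfun i₀ jfun v (f + f') i = Yfun i₀ jfun v f i + Yfun i₀ jfun v f' i
    unfold Yfun
    split
    · simp [add_smul]
    · simp
  map_smul' c f := by
    funext i
    show Yfun i₀ jfun v (c • f) i = c • Yfun i₀ jfun v f i
    unfold Yfun
    split
    · simp [mul_smul]
    · simp

variable (u : ℕ → M i₀) (hv : ∀ n, transDown R M g i₀ (jfun n) (v n) = u n)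
include hv

/-- Images of `Yfun f` under the transition maps into `M i₀`. -/
noncomputable def zfun (f : ℕ → R) (j : ℕ) : M i₀ :=
  transDown R M g i₀ j (Yfun i₀ jfun v f (i₀ + j))

theorem zfun_at (f : ℕ → R) (n : ℕ) :
    zfun g i₀ jfun v f (jfun n) = f n • u n := by
  rw [zfun, Yfun_at i₀ jfun v hjmono, map_smul, hv]

omit hjmono hv in
theorem zfun_off (f : ℕ → R) (j : ℕ) (h : ∀ n, jfun n ≠ j) :
    zfun g i₀ jfun v f j = 0 := by
  rw [zfun, Yfun_off, map_zero]
  rintro ⟨n, hn⟩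
  exact h n (Nat.add_left_cancel hn)

theorem zfun_sum (f : ℕ → R) (N : ℕ) :
    ∑ j ∈ Finset.range (jfun N), zfun g i₀ jfun v f j
      = ∑ n ∈ Finset.range N, f n • u n := by
  have himg : (Finset.range N).image jfun ⊆ Finset.range (jfun N) := by
    intro j hj
    obtain ⟨n, hn, rfl⟩ := Finset.mem_image.mp hj
    exact Finset.mem_range.mpr (hjmono (Finset.mem_range.mp hn))
  rw [← Finset.sum_subset himg]
  · rw [Finset.sum_image (fun a _ b _ h => hjmono.injective h)]
    exact Finset.sum_congr rfl fun n _ => zfun_at g i₀ jfun v hjmono u hv f n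
  · intro j hjr hj
    apply zfun_off
    intro n hn
    apply hj
    have hn' : n < N := by
      have : jfun n < jfun N := hn ▸ Finset.mem_range.mp hjr
      exact hjmono.lt_iff_lt.mp this
    exact Finset.mem_image.mpr ⟨n, Finset.mem_range.mpr hn', hn⟩

/-- The key computation: if `Yfun f - Yfun f'` lies in the range of the Eilenberg map
(with witness `x`), then the partial sums `∑ (f n - f' n) • u n` converge to `x i₀`. -/
theorem key_lemma (f f' : ℕ → R) (x : ∀ i, M i)
    (hx : eilenberg R M g x = Yfun i₀ jfun v f - Yfun i₀ jfun v f') (N : ℕ) :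
    x i₀ - ∑ n ∈ Finset.range N, (f n - f' n) • u n ∈ B g i₀ (jfun N) := by
  set c : ℕ → M i₀ := fun j => transDown R M g i₀ j (x (i₀+j)) with hcdef
  have hterm : ∀ j, zfun g i₀ jfun v f j - zfun g i₀ jfun v f' j = c j - c (j+1) := by
    intro j
    have h1 : Yfun i₀ jfun v f (i₀+j) - Yfun i₀ jfun v f' (i₀+j)
        = x (i₀+j) - g (i₀+j) (x (i₀+j+1)) := by
      rw [← eilenberg_apply, hx]
      rfl
    have h2 : c (j+1) = transDown R M g i₀ j (g (i₀+j) (x (i₀+j+1))) := rfl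
    rw [zfun, zfun, ← map_sub, h1, map_sub, h2]
  have tele : ∀ J, ∑ j ∈ Finset.range J, (c j - c (j+1)) = c 0 - c J :=
    fun J => Finset.sum_range_sub' c J
  have hsum : ∑ n ∈ Finset.range N, (f n - f' n) • u n = c 0 - c (jfun N) := by
    rw [← tele (jfun N)]
    rw [← Finset.sum_congr rfl fun j (_ : j ∈ Finset.range (jfun N)) => hterm j]
    rw [Finset.sum_sub_distrib,
      zfun_sum g i₀ jfun v hjmono u hv, zfun_sum g i₀ jfun v hjmono u hv,
      ← Finset.sum_sub_distrib]
    exact Finset.sum_congr rfl fun n _ => sub_smul _ _ _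
  have hc0 : c 0 = x i₀ := rfl
  rw [hsum, hc0]
  have : x i₀ - (x i₀ - c (jfun N)) = c (jfun N) := by abel
  rw [this]
  exact ⟨x (i₀ + jfun N), rfl⟩

omit hjmono hv in
/-- limits of converging sums are determined: if all partial sums of `∑ δ n • u n`
lie in the respective `B`'s, the coefficients vanish step by step. -/
theorem uniq_lemma (δ : ℕ → R)
    (hδ : ∀ N, ∑ n ∈ Finset.range N, δ n • u n ∈ B g i₀ (jfun N))
    (hstep : ∀ n, δ n • u n ∈ B g i₀ (jfun (n+1)) → δ n = 0) : ∀ n, δ n = 0 := by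
  intro n
  induction n using Nat.strong_induction_on with
  | _ n ih =>
    have h := hδ (n+1)
    have hs : ∑ m ∈ Finset.range (n+1), δ m • u m = δ n • u n := by
      rw [Finset.sum_range_succ, Finset.sum_eq_zero, zero_add]
      intro m hm
      rw [ih m (Finset.mem_range.mp hm), zero_smul]
    exact hstep n (hs ▸ h)

end PartB

end DLaux

namespace DLaux

theorem countable_of_cg {R N : Type} [CommRing R] [Countable R] [AddCommGroup N]
    [Module R N] (h : CountablyGeneratedMod R N) : Countable N := by
  obtain ⟨S, hS, hspan⟩ := h
  haveI := hS.to_subtype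
  have hsurj : Function.Surjective (Finsupp.linearCombination R ((↑) : S → N)) := by
    rw [← LinearMap.range_eq_top, Finsupp.range_linearCombination, Subtype.range_coe]
    exact hspan
  exact hsurj.countable

theorem rank_le_of_cg {R N : Type} [CommRing R] [StrongRankCondition R] [AddCommGroup N]
    [Module R N] (h : CountablyGeneratedMod R N) : Module.rank R N ≤ Cardinal.aleph0 := by
  obtain ⟨S, hS, hspan⟩ := h
  haveI := hS.to_subtype
  calc Module.rank R N = Module.rank R (⊤ : Submodule R N) :=
        (Submodule.topEquiv.rank_eq).symm
    _ = Module.rank R (Submodule.span R S) := by rw [hspan]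
    _ ≤ Cardinal.mk S := rank_span_le S
    _ ≤ Cardinal.aleph0 := Cardinal.mk_le_aleph0_iff.mpr inferInstance

theorem not_countable_funBool : ¬ Countable (ℕ → Bool) := by
  classical
  intro h
  have hinj1 : Function.Injective (fun (s : Set ℕ) (n : ℕ) => if n ∈ s then true else false) := by
    intro s t hst
    ext n
    have := congrFun hst n
    by_cases hn : n ∈ s <;> by_cases hn' : n ∈ t <;> simp_all
  haveI : Countable (Set ℕ) := hinj1.countable
  obtain ⟨f, hf⟩ := Countable.exists_injective_nat (Set ℕ)
  exact Function.cantor_injective f hf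

end DLaux

/-- Let `R` be a field or a countable PID, and let `(Mᵢ, gᵢ)` be an inverse sequence of
countably generated `R`-modules.  Then the derived limit `lim¹ Mᵢ` is either zero or not
countably generated as an `R`-module. -/
theorem derivedLim_zero_or_not_countablyGenerated
    (R : Type) [CommRing R]
    (hR : IsField R ∨ (Countable R ∧ IsDomain R ∧ IsPrincipalIdealRing R))
    (M : ℕ → Type) [∀ i, AddCommGroup (M i)] [∀ i, Module R (M i)]
    (g : ∀ i : ℕ, M (i + 1) →ₗ[R] M i)
    (hcg : ∀ i : ℕ, CountablyGeneratedMod R (M i)) :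
    Subsingleton (derivedLim R M g) ∨ ¬ CountablyGeneratedMod R (derivedLim R M g) := by
  classical
  by_cases hml : MittagLeffler R M g
  · exact Or.inl (Submodule.Quotient.subsingleton_iff.mpr (DLaux.surj_of_ml g hml))
  right
  intro hcgL
  rw [MittagLeffler] at hml
  push_neg at hml
  obtain ⟨i₀, hml⟩ := hml
  -- strictly decreasing chain of images
  have hBdrop : ∀ j, ∃ j', j < j' ∧ DLaux.B g i₀ j' < DLaux.B g i₀ j := by
    intro j
    obtain ⟨k, hk⟩ := hml j
    have hne : DLaux.B g i₀ (j + k) ≠ DLaux.B g i₀ j := hk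
    have hk0 : k ≠ 0 := by rintro rfl; exact hne rfl
    exact ⟨j + k, by omega, lt_of_le_of_ne (DLaux.B_le g i₀ j k) hne⟩
  choose nxt hnxt1 hnxt2 using hBdrop
  set jfun : ℕ → ℕ := fun n => Nat.rec 0 (fun _ p => nxt p) n with hjfun
  have hjstep : ∀ n, jfun (n+1) = nxt (jfun n) := fun n => rfl
  have hjmono : StrictMono jfun :=
    strictMono_nat_of_lt_succ (fun n => by rw [hjstep]; exact hnxt1 _)
  have hlt : ∀ n, DLaux.B g i₀ (jfun (n+1)) < DLaux.B g i₀ (jfun n) :=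
    fun n => by rw [hjstep]; exact hnxt2 _
  have huex : ∀ n, ∃ x, x ∈ DLaux.B g i₀ (jfun n) ∧ x ∉ DLaux.B g i₀ (jfun (n+1)) := by
    intro n
    obtain ⟨x, hx1, hx2⟩ := SetLike.exists_of_lt (hlt n)
    exact ⟨x, hx1, hx2⟩
  choose u humem hunot using huex
  have hvex : ∀ n, ∃ m : M (i₀ + jfun n), transDown R M g i₀ (jfun n) m = u n :=
    fun n => humem n
  choose v hv using hvex
  -- nontriviality
  have h10 : (1 : R) ≠ 0 := by
    intro h
    apply hunot 0
    have hu0 : u 0 = 0 := by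
      calc u 0 = (1 : R) • u 0 := (one_smul _ _).symm
        _ = (0 : R) • u 0 := by rw [h]
        _ = 0 := zero_smul _ _
    rw [hu0]
    exact Submodule.zero_mem _
  rcases hR with hfield | ⟨hcR, hdom, hpid⟩
  · -- field case
    letI : Field R := hfield.toField
    set Θ : (ℕ → R) →ₗ[R] derivedLim R M g :=
      (LinearMap.range (eilenberg R M g)).mkQ.comp (DLaux.Ymap i₀ jfun v) with hΘ
    -- solutions of the convergence condition
    have hex : ∀ f : ↥(LinearMap.ker Θ), ∃ s : M i₀,
        ∀ N, s - ∑ n ∈ Finset.range N, f.1 n • u n ∈ DLaux.B g i₀ (jfun N) := by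
      rintro ⟨f, hf⟩
      rw [LinearMap.mem_ker, hΘ, LinearMap.comp_apply, Submodule.mkQ_apply,
        Submodule.Quotient.mk_eq_zero] at hf
      obtain ⟨x, hx⟩ := hf
      have hx' : eilenberg R M g x
          = DLaux.Yfun i₀ jfun v f - DLaux.Yfun i₀ jfun v (0 : ℕ → R) := by
        rw [show DLaux.Yfun i₀ jfun v (0 : ℕ → R) = 0 from
          map_zero (DLaux.Ymap i₀ jfun v), sub_zero]
        exact hx
      refine ⟨x i₀, fun N => ?_⟩
      have hk := DLaux.key_lemma g i₀ jfun v hjmono u hv f 0 x hx' N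
      simpa using hk
    choose sel hsel using hex
    set Kinf : Submodule R (M i₀) := ⨅ N : ℕ, DLaux.B g i₀ (jfun N) with hKinf
    have huniqK : ∀ (f : ↥(LinearMap.ker Θ)) (s : M i₀),
        (∀ N, s - ∑ n ∈ Finset.range N, f.1 n • u n ∈ DLaux.B g i₀ (jfun N)) →
        sel f - s ∈ Kinf := by
      intro f s hs
      rw [hKinf, Submodule.mem_iInf]
      intro N
      have := Submodule.sub_mem _ (hsel f N) (hs N)
      simpa using this
    -- the comparison map
    set ξ : ↥(LinearMap.ker Θ) →ₗ[R] (M i₀ ⧸ Kinf) :=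
      { toFun := fun f => Submodule.Quotient.mk (sel f)
        map_add' := by
          intro f f'
          rw [← Submodule.Quotient.mk_add]
          refine (Submodule.Quotient.eq _).mpr ?_
          apply huniqK
          intro N
          have h1 := hsel f N
          have h2 := hsel f' N
          have h3 := Submodule.add_mem _ h1 h2
          have halg : (sel f - ∑ n ∈ Finset.range N, f.1 n • u n)
              + (sel f' - ∑ n ∈ Finset.range N, f'.1 n • u n)
              = (sel f + sel f') - ∑ n ∈ Finset.range N, (f + f').1 n • u n := by
            have hsum : ∑ n ∈ Finset.range N, (f + f').1 n • u n
                = ∑ n ∈ Finset.range N, f.1 n • u n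
                  + ∑ n ∈ Finset.range N, f'.1 n • u n := by
              rw [← Finset.sum_add_distrib]
              refine Finset.sum_congr rfl fun n _ => ?_
              have : (f + f').1 n = f.1 n + f'.1 n := rfl
              rw [this, add_smul]
            rw [hsum]
            abel
          rw [halg] at h3
          exact h3
        map_smul' := by
          intro c f
          simp only [RingHom.id_apply]
          rw [← Submodule.Quotient.mk_smul]
          refine (Submodule.Quotient.eq _).mpr ?_
          apply huniqK
          intro N
          have h1 := Submodule.smul_mem _ c (hsel f N)
          have halg : c • (sel f - ∑ n ∈ Finset.range N, f.1 n • u n)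
              = c • sel f - ∑ n ∈ Finset.range N, (c • f).1 n • u n := by
            rw [smul_sub, Finset.smul_sum]
            congr 1
            refine Finset.sum_congr rfl fun n _ => ?_
            have : (c • f).1 n = c * f.1 n := rfl
            rw [this, ← smul_smul]
          rw [halg] at h1
          exact h1 } with hξ
    have h0 : ∀ f, ξ f = 0 → f = 0 := by
      intro f hf0
      have hsK : sel f ∈ Kinf := by
        have : ξ f = Submodule.Quotient.mk (sel f) := rfl
        rw [this, Submodule.Quotient.mk_eq_zero] at hf0
        exact hf0
      have hδ : ∀ N, ∑ n ∈ Finset.range N, f.1 n • u n ∈ DLaux.B g i₀ (jfun N) := by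
        intro N
        have h1 := hsel f N
        have h2 : sel f ∈ DLaux.B g i₀ (jfun N) := by
          rw [hKinf, Submodule.mem_iInf] at hsK
          exact hsK N
        have := Submodule.sub_mem _ h2 h1
        simpa using this
      have hz : ∀ n, f.1 n = 0 := by
        apply DLaux.uniq_lemma g i₀ jfun u _ hδ
        intro n hmem
        by_contra hne
        apply hunot n
        have hinv : u n = (f.1 n)⁻¹ • (f.1 n • u n) := by
          rw [smul_smul, inv_mul_cancel₀ hne, one_smul]
        rw [hinv]
        exact Submodule.smul_mem _ _ hmem
      exact Subtype.ext (funext hz)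
    have hξinj : Function.Injective ξ :=
      LinearMap.ker_eq_bot.mp (LinearMap.ker_eq_bot'.mpr h0)
    -- rank bounds
    have hrk_ker : Module.rank R ↥(LinearMap.ker Θ) ≤ Cardinal.aleph0 :=
      le_trans (LinearMap.rank_le_of_injective ξ hξinj)
        (le_trans (rank_quotient_le Kinf) (DLaux.rank_le_of_cg (hcg i₀)))
    have hrk_range : Module.rank R ↥(LinearMap.range Θ) ≤ Cardinal.aleph0 :=
      le_trans (Submodule.rank_le _) (DLaux.rank_le_of_cg hcgL)
    have hrn := LinearMap.rank_range_add_rank_ker Θ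
    have h2R : (2 : Cardinal) ≤ Cardinal.mk R := Cardinal.two_le_iff.mpr ⟨1, 0, h10⟩
    have hbig : Cardinal.aleph0 < Module.rank R (ℕ → R) := by
      calc Cardinal.aleph0 < 2 ^ Cardinal.aleph0 := Cardinal.cantor _
        _ ≤ Cardinal.mk R ^ Cardinal.aleph0 := Cardinal.power_le_power_right h2R
        _ = Cardinal.mk (ℕ → R) := by rw [← Cardinal.mk_nat]; exact Cardinal.power_def R ℕ
        _ = Module.rank R (ℕ → R) := rank_fun_infinite.symm
    have hle : Module.rank R (ℕ → R) ≤ Cardinal.aleph0 := by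
      calc Module.rank R (ℕ → R)
          = Module.rank R ↥(LinearMap.range Θ) + Module.rank R ↥(LinearMap.ker Θ) := hrn.symm
        _ ≤ Cardinal.aleph0 + Cardinal.aleph0 := add_le_add hrk_range hrk_ker
        _ = Cardinal.aleph0 := Cardinal.aleph0_add_aleph0
    exact absurd hbig (not_lt.mpr hle)
  · -- countable ring case
    haveI : Countable R := hcR
    have hMc : Countable (M i₀) := DLaux.countable_of_cg (hcg i₀)
    have hLc : Countable (derivedLim R M g) := DLaux.countable_of_cg hcgL
    set e : (ℕ → Bool) → (ℕ → R) := fun b n => if b n then 1 else 0 with he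
    set cls : (ℕ → Bool) → derivedLim R M g :=
      fun b => Submodule.Quotient.mk (DLaux.Yfun i₀ jfun v (e b)) with hcls
    set pick : derivedLim R M g → (ℕ → Bool) :=
      fun l => if h : ∃ b, cls b = l then h.choose else (fun _ => false) with hpick
    have hpick_spec : ∀ b, cls (pick (cls b)) = cls b := by
      intro b
      have h : ∃ b', cls b' = cls b := ⟨b, rfl⟩
      rw [hpick]
      simp only [dif_pos h]
      exact h.choose_spec
    have hkey : ∀ b : ℕ → Bool, ∃ s : M i₀, ∀ N,
        s - ∑ n ∈ Finset.range N, (e b n - e (pick (cls b)) n) • u n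
          ∈ DLaux.B g i₀ (jfun N) := by
      intro b
      have h : DLaux.Yfun i₀ jfun v (e b) - DLaux.Yfun i₀ jfun v (e (pick (cls b)))
          ∈ LinearMap.range (eilenberg R M g) :=
        (Submodule.Quotient.eq _).mp (hpick_spec b).symm
      obtain ⟨x, hx⟩ := h
      exact ⟨x i₀, fun N => DLaux.key_lemma g i₀ jfun v hjmono u hv _ _ x hx N⟩
    choose sfun hsfun using hkey
    set G : (ℕ → Bool) → (derivedLim R M g) × M i₀ := fun b => (cls b, sfun b) with hG
    have hGinj : Function.Injective G := by
      intro b₁ b₂ hGeq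
      have hclseq : cls b₁ = cls b₂ := congrArg Prod.fst hGeq
      have hseq : sfun b₁ = sfun b₂ := congrArg Prod.snd hGeq
      have hδ : ∀ N, ∑ n ∈ Finset.range N, (e b₁ n - e b₂ n) • u n
          ∈ DLaux.B g i₀ (jfun N) := by
        intro N
        have h1 := hsfun b₁ N
        have h2 := hsfun b₂ N
        rw [hseq, hclseq] at h1
        have h3 := Submodule.sub_mem _ h2 h1
        have halg : (sfun b₂ - ∑ n ∈ Finset.range N, (e b₂ n - e (pick (cls b₂)) n) • u n)
            - (sfun b₂ - ∑ n ∈ Finset.range N, (e b₁ n - e (pick (cls b₂)) n) • u n)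
            = ∑ n ∈ Finset.range N, ((e b₁ n - e (pick (cls b₂)) n) • u n
                - (e b₂ n - e (pick (cls b₂)) n) • u n) := by
          rw [Finset.sum_sub_distrib]
          abel
        rw [halg] at h3
        have hterm : ∀ n ∈ Finset.range N,
            (e b₁ n - e (pick (cls b₂)) n) • u n - (e b₂ n - e (pick (cls b₂)) n) • u n
              = (e b₁ n - e b₂ n) • u n := by
          intro n _
          rw [← sub_smul]
          congr 1
          ring
        rw [Finset.sum_congr rfl hterm] at h3
        exact h3
      have hzero : ∀ n, e b₁ n - e b₂ n = 0 := by
        apply DLaux.uniq_lemma g i₀ jfun u _ hδ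
        intro n hmem
        by_cases hbb : b₁ n = b₂ n
        · simp [he, hbb]
        · exfalso
          apply hunot n
          cases hb1 : b₁ n <;> cases hb2 : b₂ n
          · exact absurd (hb1.trans hb2.symm) hbb
          · have hx : (e b₁ n - e b₂ n) • u n = -(u n) := by simp [he, hb1, hb2]
            rw [hx] at hmem
            exact neg_mem_iff.mp hmem
          · have hx : (e b₁ n - e b₂ n) • u n = u n := by simp [he, hb1, hb2]
            rw [hx] at hmem
            exact hmem
          · exact absurd (hb1.trans hb2.symm) hbb
      funext n
      have hn : e b₁ n = e b₂ n := sub_eq_zero.mp (hzero n)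
      cases hb1 : b₁ n <;> cases hb2 : b₂ n
      · rfl
      · exact absurd (by simpa [he, hb1, hb2] using hn.symm) h10
      · exact absurd (by simpa [he, hb1, hb2] using hn) h10
      · rfl
    haveI : Countable ((derivedLim R M g) × M i₀) := inferInstance
    exact DLaux.not_countable_funBool (hGinj.countable)
end

section
/- Let R be a commutative ring that is either a field or a countable principal ideal domain, and let (M_i, g_i) be an inverse sequence of countably generated R-modules. If the inverse limit lim M_i is a countably generated R-module, then there exists i₀ such that for every k ≥ i₀ the projection f_k : lim M_i → M_k is injective. -/
section Aux

variable (R : Type) [CommRing R] (M : ℕ → Type)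
    [∀ i, AddCommGroup (M i)] [∀ i, Module R (M i)]
    (g : ∀ i : ℕ, M (i + 1) →ₗ[R] M i)

lemma invLim_coord {x : (i : ℕ) → M i} (hx : x ∈ invLim R M g) (m : ℕ) :
    x m = g m (x (m + 1)) := by
  have h := congrFun (LinearMap.mem_ker.mp hx) m
  simp only [eilenberg, LinearMap.coe_mk, AddHom.coe_mk, Pi.zero_apply, sub_eq_zero] at h
  exact h

lemma invLim_vanish {x : (i : ℕ) → M i} (hx : x ∈ invLim R M g) :
    ∀ i, x i = 0 → ∀ m, m ≤ i → x m = 0 := by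
  intro i
  induction i with
  | zero =>
    intro h0 m hm
    rw [Nat.le_zero.mp hm]; exact h0
  | succ i ih =>
    intro h m hm
    have hxi : x i = 0 := by
      rw [invLim_coord R M g hx i, h, map_zero]
    rcases Nat.lt_succ_iff_lt_or_eq.mp (Nat.lt_succ_of_le hm) with h' | h'
    · exact ih hxi m (Nat.lt_succ_iff.mp h')
    · rw [h']; exact h

lemma countable_of_cg {N : Type} [AddCommGroup N] [Module R N] [Countable R]
    (h : CountablyGeneratedMod R N) : Countable N := by
  obtain ⟨S, hSc, hSsp⟩ := h
  haveI : Countable S := hSc.to_subtype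
  have hsur : Function.Surjective (Finsupp.linearCombination R ((↑) : S → N)) := by
    rw [← LinearMap.range_eq_top, Finsupp.range_linearCombination, Subtype.range_coe]
    exact hSsp
  exact hsur.countable

end Aux

/-- Let `R` be a field or a countable PID, and let `(Mᵢ, gᵢ)` be an inverse sequence of
countably generated `R`-modules.  If the inverse limit `lim Mᵢ` is countably generated, then
the projections `f_k : lim Mᵢ → M_k` are injective for all sufficiently large `k`. -/

theorem limProj_eventually_injective_of_countablyGenerated
    (R : Type) [CommRing R]
    (hR : IsField R ∨ (Countable R ∧ IsDomain R ∧ IsPrincipalIdealRing R))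
    (M : ℕ → Type) [∀ i, AddCommGroup (M i)] [∀ i, Module R (M i)]
    (g : ∀ i : ℕ, M (i + 1) →ₗ[R] M i)
    (hcg : ∀ i : ℕ, CountablyGeneratedMod R (M i))
    (hlim : CountablyGeneratedMod R ↥(invLim R M g)) :
    ∃ i₀ : ℕ, ∀ k : ℕ, i₀ ≤ k → Function.Injective (limProj R M g k) := by
  classical
  by_contra hcon
  push_neg at hcon
  -- For every `i` there is a nonzero element of the limit vanishing up to coordinate `i`.
  have H : ∀ i : ℕ, ∃ x : ↥(invLim R M g), ∃ j : ℕ, i < j ∧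
      (∀ m, m ≤ i → (x : (n : ℕ) → M n) m = 0) ∧ (x : (n : ℕ) → M n) j ≠ 0 := by
    intro i
    obtain ⟨k', hik, hnin⟩ := hcon i
    obtain ⟨x, hxker, hx0⟩ : ∃ x, x ∈ LinearMap.ker (limProj R M g k') ∧ x ≠ 0 := by
      by_contra h'
      push_neg at h'
      exact hnin (LinearMap.ker_eq_bot.mp ((Submodule.eq_bot_iff _).mpr h'))
    have hxk : (x : (n : ℕ) → M n) k' = 0 := hxker
    have hxv : ∀ m, m ≤ k' → (x : (n : ℕ) → M n) m = 0 :=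
      invLim_vanish R M g x.2 k' hxk
    have hval : (x : (n : ℕ) → M n) ≠ 0 := fun h => hx0 (Subtype.ext h)
    obtain ⟨j, hj⟩ := Function.ne_iff.mp hval
    have hj' : (x : (n : ℕ) → M n) j ≠ 0 := hj
    have hij : k' < j := by
      by_contra hle
      exact hj' (hxv j (le_of_not_gt hle))
    exact ⟨x, j, lt_of_le_of_lt hik hij, fun m hm => hxv m (le_trans hm hik), hj'⟩
  choose xf jf hjf hxvf hxnf using H
  -- The sequence of coordinates and elements.
  set k : ℕ → ℕ := fun n => Nat.rec 0 (fun _ kn => jf kn) n with hk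
  have hks : ∀ n, k (n + 1) = jf (k n) := fun n => rfl
  set x : ℕ → ↥(invLim R M g) := fun n => xf (k n) with hxdef
  have hklt : ∀ n, k n < k (n + 1) := fun n => hjf (k n)
  have hkmono : StrictMono k := strictMono_nat_of_lt_succ hklt
  have hkge : ∀ n, n ≤ k n := fun n => hkmono.le_apply
  have hvan : ∀ n m, m ≤ k n → (x n : (i : ℕ) → M i) m = 0 := fun n => hxvf (k n)
  have hnz : ∀ n, (x n : (i : ℕ) → M i) (k (n + 1)) ≠ 0 := fun n => hxnf (k n)
  -- The summation map `S : R^ℕ → ∏ M_i`.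
  set S : (ℕ → R) →ₗ[R] ((i : ℕ) → M i) :=
    { toFun := fun a m => ∑ n ∈ Finset.range m, a n • (x n : (i : ℕ) → M i) m
      map_add' := by
        intro a b
        funext m
        simp [add_smul, Finset.sum_add_distrib]
      map_smul' := by
        intro c a
        funext m
        simp [Finset.smul_sum, smul_smul] } with hSdef
  have hSapp : ∀ a m, S a m = ∑ n ∈ Finset.range m, a n • (x n : (i : ℕ) → M i) m :=
    fun a m => rfl
  have hSmem : ∀ a, S a ∈ invLim R M g := by
    intro a
    rw [invLim, LinearMap.mem_ker]
    funext m
    show S a m - g m (S a (m + 1)) = 0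
    have h1 : g m (S a (m + 1)) =
        ∑ n ∈ Finset.range (m + 1), a n • (x n : (i : ℕ) → M i) m := by
      rw [hSapp, map_sum]
      refine Finset.sum_congr rfl fun n _ => ?_
      rw [map_smul, ← invLim_coord R M g (x n).2 m]
    rw [h1, Finset.sum_range_succ, hvan m m (hkge m), smul_zero, add_zero, hSapp, sub_self]
  set T : (ℕ → R) →ₗ[R] ↥(invLim R M g) := S.codRestrict _ hSmem with hTdef
  have hTeval : ∀ (a : ℕ → R) (n : ℕ),
      ((T a : ↥(invLim R M g)) : (i : ℕ) → M i) (k (n + 1)) =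
        ∑ j ∈ Finset.range (n + 1), a j • (x j : (i : ℕ) → M i) (k (n + 1)) := by
    intro a n
    show S a (k (n + 1)) = _
    rw [hSapp]
    refine (Finset.sum_subset (Finset.range_subset_range.mpr (hkge (n + 1))) ?_).symm
    intro j _ hj
    have hj1 : n + 1 ≤ j := Nat.le_of_not_lt (fun h => hj (Finset.mem_range.mpr h))
    rw [hvan j (k (n + 1)) (hkmono.monotone hj1), smul_zero]
  have hTzero : ∀ a : ℕ → R, T a = 0 → ∀ n, (∀ j, j < n → a j = 0) →
      a n • (x n : (i : ℕ) → M i) (k (n + 1)) = 0 := by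
    intro a ha n hsmall
    have h1 : ((T a : ↥(invLim R M g)) : (i : ℕ) → M i) (k (n + 1)) = 0 := by
      rw [ha]; rfl
    rw [hTeval, Finset.sum_range_succ] at h1
    have h2 : ∑ j ∈ Finset.range n, a j • (x j : (i : ℕ) → M i) (k (n + 1)) = 0 :=
      Finset.sum_eq_zero fun j hj => by
        rw [hsmall j (Finset.mem_range.mp hj), zero_smul]
    rwa [h2, zero_add] at h1
  rcases hR with hfield | ⟨hcnt, _, _⟩
  · -- Field case: `T` is injective, contradicting the Erdős–Kaplansky theorem.
    letI : Field R := hfield.toField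
    have hTker : ∀ a : ℕ → R, T a = 0 → a = 0 := by
      intro a ha
      funext n
      induction n using Nat.strong_induction_on with
      | _ n ih =>
        have h := hTzero a ha n ih
        rcases smul_eq_zero.mp h with h' | h'
        · exact h'
        · exact absurd h' (hnz n)
    have hTinj : Function.Injective T := by
      intro a b hab
      have : T (a - b) = 0 := by rw [map_sub, hab, sub_self]
      have := hTker _ this
      exact sub_eq_zero.mp this
    obtain ⟨SS, hSSc, hSSsp⟩ := hlim
    haveI : Countable SS := hSSc.to_subtype
    have hrank1 : Module.rank R ↥(invLim R M g) ≤ Cardinal.aleph0 := by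
      have h1 : Module.rank R ↥(invLim R M g) =
          Module.rank R ↥(Submodule.span R SS) := by
        rw [hSSsp, rank_top]
      rw [h1]
      exact le_trans (rank_span_le (R := R) SS) Cardinal.mk_le_aleph0
    have hrank2 : Module.rank R (ℕ → R) ≤ Module.rank R ↥(invLim R M g) :=
      T.rank_le_of_injective hTinj
    have hrank3 : Cardinal.mk (ℕ → R) ≤ Cardinal.aleph0 := by
      rw [← rank_fun_infinite]
      exact hrank2.trans hrank1
    have h2 : (2 : Cardinal) ^ (Cardinal.aleph0 : Cardinal) ≤ Cardinal.mk (ℕ → R) := by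
      have htwo : (2 : Cardinal) ≤ Cardinal.mk R :=
        Cardinal.two_le_iff.mpr ⟨0, 1, zero_ne_one⟩
      calc (2 : Cardinal) ^ (Cardinal.aleph0 : Cardinal)
          ≤ Cardinal.mk R ^ (Cardinal.aleph0 : Cardinal) :=
            Cardinal.power_le_power_right htwo
        _ = Cardinal.mk (ℕ → R) := by rw [← Cardinal.mk_nat, Cardinal.power_def]
    exact absurd (h2.trans hrank3) (not_le.mpr (Cardinal.cantor Cardinal.aleph0))
  · -- Countable PID case: the limit would be countable, but contains `2^ℕ`.
    haveI : Countable ↥(invLim R M g) := countable_of_cg R hlim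
    set c : (ℕ → Bool) → (ℕ → R) := fun b n => if b n then (1 : R) else 0 with hcdef
    have hφinj : Function.Injective (fun b : ℕ → Bool => T (c b)) := by
      intro b b' hbb
      by_contra hne
      have hex : ∃ n, b n ≠ b' n := Function.ne_iff.mp hne
      set n := Nat.find hex with hn
      have hmin : ∀ j, j < n → b j = b' j := fun j hj => not_not.mp (Nat.find_min hex hj)
      have hspec : b n ≠ b' n := Nat.find_spec hex
      have hbb' : T (c b) = T (c b') := hbb
      have hz : T (c b - c b') = 0 := by
        rw [map_sub, hbb', sub_self]
      have hsmall : ∀ j, j < n → (c b - c b') j = 0 := by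
        intro j hj
        simp only [Pi.sub_apply, hcdef, hmin j hj, sub_self]
      have hkey := hTzero _ hz n hsmall
      have hcoef : (c b - c b') n = 1 ∨ (c b - c b') n = -1 := by
        simp only [Pi.sub_apply, hcdef]
        cases hb : b n <;> cases hb' : b' n <;>
          simp_all
      rcases hcoef with h' | h'
      · rw [h', one_smul] at hkey
        exact hnz n hkey
      · rw [h', neg_smul, one_smul, neg_eq_zero] at hkey
        exact hnz n hkey
    haveI : Countable (ℕ → Bool) := hφinj.countable
    have h1 : Cardinal.mk (ℕ → Bool) ≤ Cardinal.aleph0 := Cardinal.mk_le_aleph0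
    have h2 : (2 : Cardinal) ^ (Cardinal.aleph0 : Cardinal) = Cardinal.mk (ℕ → Bool) := by
      rw [← Cardinal.mk_bool, ← Cardinal.mk_nat, Cardinal.power_def]
    rw [← h2] at h1
    exact absurd h1 (not_le.mpr (Cardinal.cantor Cardinal.aleph0))
end

section
/- Let R be a principal ideal domain, let (M_i, g_i) be a stable inverse sequence of R-modules with inverse limit M := lim M_i, and let N be an R-module. Then the induced inverse sequence (M_i ⊗_R N) with bonding maps g_i ⊗ id_N is stable, and the canonical R-linear map M ⊗_R N → lim (M_i ⊗_R N), induced by the maps f_i ⊗ id_N : M ⊗_R N → M_i ⊗_R N, is an isomorphism. -/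
open TensorProduct

section helpers
variable (R : Type) [CommRing R] (M : ℕ → Type)
    [∀ i, AddCommGroup (M i)] [∀ i, Module R (M i)]
    (g : ∀ i : ℕ, M (i + 1) →ₗ[R] M i)

noncomputable def castM {a b : ℕ} (h : a = b) : M a →ₗ[R] M b := by
  subst h; exact LinearMap.id

@[simp] lemma castM_self {a : ℕ} (h : a = a) (x : M a) : castM R M h x = x := rfl

lemma castM_trans {a b c : ℕ} (h1 : a = b) (h2 : b = c) (x : M a) :
    castM R M h2 (castM R M h1 x) = castM R M (h1.trans h2) x := by
  subst h1; subst h2; rfl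

lemma g_castM {a b : ℕ} (h : a = b) (x : M (a + 1)) :
    g b (castM R M (by rw [h]) x) = castM R M h (g a x) := by
  subst h; rfl

lemma mem_invLim {x : (i : ℕ) → M i} :
    x ∈ invLim R M g ↔ ∀ i, x i = g i (x (i + 1)) := by
  simp [invLim, eilenberg, LinearMap.mem_ker, LinearMap.ext_iff, funext_iff, sub_eq_zero,
    LinearMap.coe_mk, AddHom.coe_mk]

lemma coherent {x : (i : ℕ) → M i} (hx : x ∈ invLim R M g) (i e : ℕ) :
    transDown R M g i e (x (i + e)) = x i := by
  induction e with
  | zero => rfl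
  | succ e ih =>
    show transDown R M g i e (g (i + e) (x ((i + e) + 1))) = x i
    rw [← (mem_invLim R M g).mp hx (i + e)]; exact ih

lemma transDown_left (k e : ℕ) :
    (transDown R M g k (e + 1)).comp (castM R M (by omega : (k + 1) + e = k + (e + 1)))
      = (g k).comp (transDown R M g (k + 1) e) := by
  induction e with
  | zero => ext x; rfl
  | succ e ih =>
    ext x
    exact (congrArg (transDown R M g k (e + 1))
        (g_castM R M g (show (k + 1) + e = k + (e + 1) by omega) x)).trans
      (LinearMap.congr_fun ih (g ((k + 1) + e) x))

end helpers

section helpers2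
variable (R : Type) [CommRing R] (M : ℕ → Type)
    [∀ i, AddCommGroup (M i)] [∀ i, Module R (M i)]
    (g : ∀ i : ℕ, M (i + 1) →ₗ[R] M i)

lemma castM_surj {a b : ℕ} (h : a = b) : Function.Surjective (castM R M h) := by
  subst h; exact fun x => ⟨x, rfl⟩

lemma range_transDown_succ_left (k e : ℕ) :
    LinearMap.range (transDown R M g k (e + 1)) =
      Submodule.map (g k) (LinearMap.range (transDown R M g (k + 1) e)) := by
  have h := transDown_left R M g k e
  have h1 : LinearMap.range ((transDown R M g k (e + 1)).comp
      (castM R M (by omega : (k + 1) + e = k + (e + 1)))) =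
      LinearMap.range (transDown R M g k (e + 1)) :=
    LinearMap.range_comp_of_range_eq_top _
      (LinearMap.range_eq_top.mpr (castM_surj R M _))
  rw [← h1, h, LinearMap.range_comp]

lemma range_transDown_add (k a : ℕ) : ∀ c,
    LinearMap.range (transDown R M g k (a + c)) ≤ LinearMap.range (transDown R M g k a)
  | 0 => le_rfl
  | c + 1 => by
    refine le_trans ?_ (range_transDown_add k a c)
    rintro _ ⟨x, rfl⟩
    exact ⟨g (k + (a + c)) x, rfl⟩

lemma range_transDown_antitone (k : ℕ) {a b : ℕ} (hab : a ≤ b) :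
    LinearMap.range (transDown R M g k b) ≤ LinearMap.range (transDown R M g k a) := by
  obtain ⟨c, rfl⟩ := Nat.exists_eq_add_of_le hab
  exact range_transDown_add R M g k a c

lemma chain_step (hML : MittagLeffler R M g) (d : ℕ → ℕ)
    (hd : ∀ i k, LinearMap.range (transDown R M g i (d i + k)) =
      LinearMap.range (transDown R M g i (d i)))
    (k : ℕ) (m : M k) (hm : m ∈ LinearMap.range (transDown R M g k (d k))) :
    ∃ m', m' ∈ LinearMap.range (transDown R M g (k + 1) (d (k + 1))) ∧ g k m' = m := by
  have h1 : m ∈ LinearMap.range (transDown R M g k (d k + (d (k + 1) + 1))) := by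
    rw [hd k (d (k + 1) + 1)]; exact hm
  have h2 : m ∈ LinearMap.range (transDown R M g k (d (k + 1) + 1)) :=
    range_transDown_antitone R M g k (by omega) h1
  rw [range_transDown_succ_left] at h2
  obtain ⟨m', hm', hgm⟩ := h2
  exact ⟨m', hm', hgm⟩

lemma exists_lim_elem (hML : MittagLeffler R M g) (d : ℕ → ℕ)
    (hd : ∀ i k, LinearMap.range (transDown R M g i (d i + k)) =
      LinearMap.range (transDown R M g i (d i)))
    (i : ℕ) (m : M i) (hm : m ∈ LinearMap.range (transDown R M g i (d i))) :
    ∃ x ∈ invLim R M g, x i = m := by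
  -- build the chain above level i
  let Y : ∀ k : ℕ, {v : M (i + k) // v ∈ LinearMap.range (transDown R M g (i + k) (d (i + k)))} :=
    fun k => Nat.rec ⟨m, hm⟩
      (fun k prev =>
        ⟨Classical.choose (chain_step R M g hML d hd (i + k) prev.1 prev.2),
         (Classical.choose_spec (chain_step R M g hML d hd (i + k) prev.1 prev.2)).1⟩) k
  have hY : ∀ k, g (i + k) (Y (k + 1)).1 = (Y k).1 := fun k =>
    (Classical.choose_spec (chain_step R M g hML d hd (i + k) (Y k).1 (Y k).2)).2
  -- the element
  refine ⟨fun j => transDown R M g j i (castM R M (Nat.add_comm i j) (Y j).1), ?_, ?_⟩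
  · rw [mem_invLim]
    intro j
    have step1 : g j (transDown R M g (j + 1) i
        (castM R M (Nat.add_comm i (j + 1)) (Y (j + 1)).1)) =
        transDown R M g j (i + 1)
          (castM R M (by omega : (j + 1) + i = j + (i + 1))
            (castM R M (Nat.add_comm i (j + 1)) (Y (j + 1)).1)) :=
      (LinearMap.congr_fun (transDown_left R M g j i) _).symm
    rw [step1, castM_trans]
    show transDown R M g j i (castM R M (Nat.add_comm i j) (Y j).1) =
      transDown R M g j i (g (j + i)
        (castM R M ((Nat.add_comm i (j + 1)).trans (by omega)) (Y (j + 1)).1))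
    exact (congrArg (transDown R M g j i)
      ((g_castM R M g (Nat.add_comm i j) (Y (j + 1)).1).trans
        (congrArg (castM R M (Nat.add_comm i j)) (hY j)))).symm
  · have key : ∀ e, transDown R M g i e (Y e).1 = m := by
      intro e
      induction e with
      | zero => rfl
      | succ e ih =>
        show transDown R M g i e (g (i + e) (Y (e + 1)).1) = m
        rw [hY e]; exact ih
    show transDown R M g i i (castM R M (Nat.add_comm i i) (Y i).1) = m
    rw [castM_self]
    exact key i

end helpers2

section helpers3
variable (R : Type) [CommRing R] (M : ℕ → Type)
    [∀ i, AddCommGroup (M i)] [∀ i, Module R (M i)]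
    (g : ∀ i : ℕ, M (i + 1) →ₗ[R] M i)

lemma retraction (hML : MittagLeffler R M g) (d : ℕ → ℕ)
    (hd : ∀ i k, LinearMap.range (transDown R M g i (d i + k)) =
      LinearMap.range (transDown R M g i (d i)))
    (i : ℕ) (hinj : Function.Injective (limProj R M g i)) :
    ∃ r : M (i + d i) →ₗ[R] ↥(invLim R M g),
      (∀ x : ↥(invLim R M g), r (x.1 (i + d i)) = x) ∧
      (∀ m, (r m).1 i = transDown R M g i (d i) m) := by
  have hrange : LinearMap.range (transDown R M g i (d i)) =
      LinearMap.range (limProj R M g i) := by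
    apply le_antisymm
    · rintro m hm
      obtain ⟨x, hx, hxi⟩ := exists_lim_elem R M g hML d hd i m hm
      exact ⟨⟨x, hx⟩, hxi⟩
    · rintro _ ⟨x, rfl⟩
      exact ⟨x.1 (i + d i), coherent R M g x.2 i (d i)⟩
  let e := LinearEquiv.ofInjective (limProj R M g i) hinj
  let r : M (i + d i) →ₗ[R] ↥(invLim R M g) :=
    e.symm.toLinearMap ∘ₗ LinearMap.codRestrict (LinearMap.range (limProj R M g i))
      (transDown R M g i (d i)) (fun m => hrange ▸ LinearMap.mem_range_self _ m)
  have hA : ∀ m, (r m).1 i = transDown R M g i (d i) m := by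
    intro m
    have : limProj R M g i (r m) = transDown R M g i (d i) m := by
      show limProj R M g i (e.symm ⟨transDown R M g i (d i) m, _⟩) = _
      have := e.apply_symm_apply ⟨transDown R M g i (d i) m,
        hrange ▸ LinearMap.mem_range_self _ m⟩
      have h2 := congrArg Subtype.val this
      have h3 := LinearEquiv.ofInjective_apply (h := hinj) (limProj R M g i)
        (e.symm ⟨transDown R M g i (d i) m, hrange ▸ LinearMap.mem_range_self _ m⟩)
      exact h3.symm.trans h2
    exact this
  refine ⟨r, ?_, hA⟩
  intro x
  apply hinj
  show (r (x.1 (i + d i))).1 i = x.1 i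
  rw [hA]
  exact coherent R M g x.2 i (d i)
end helpers3


section tensorhelpers
variable (R : Type) [CommRing R] (M : ℕ → Type)
    [∀ i, AddCommGroup (M i)] [∀ i, Module R (M i)]
    (g : ∀ i : ℕ, M (i + 1) →ₗ[R] M i)
    (N : Type) [AddCommGroup N] [Module R N]

lemma transDown_rTensor (i : ℕ) : ∀ e : ℕ,
    transDown R (fun i => M i ⊗[R] N) (fun i => LinearMap.rTensor N (g i)) i e
      = LinearMap.rTensor N (transDown R M g i e)
  | 0 => (LinearMap.rTensor_id N (M i)).symm
  | e + 1 => by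
    show (transDown R (fun i => M i ⊗[R] N) (fun i => LinearMap.rTensor N (g i)) i e).comp
        (LinearMap.rTensor N (g (i + e))) = _
    rw [transDown_rTensor i e]
    exact (LinearMap.rTensor_comp N _ _).symm

lemma range_rTensor_mono {A B C : Type} [AddCommGroup A] [AddCommGroup B] [AddCommGroup C]
    [Module R A] [Module R B] [Module R C] (f : A →ₗ[R] C) (f' : B →ₗ[R] C)
    (h : LinearMap.range f ≤ LinearMap.range f') :
    LinearMap.range (LinearMap.rTensor N f) ≤ LinearMap.range (LinearMap.rTensor N f') := by
  rintro _ ⟨x, rfl⟩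
  induction x using TensorProduct.induction_on with
  | zero => simp
  | tmul a n =>
    obtain ⟨b, hb⟩ := h (LinearMap.mem_range_self f a)
    exact ⟨b ⊗ₜ n, by rw [LinearMap.rTensor_tmul, LinearMap.rTensor_tmul, hb]⟩
  | add x y hx hy =>
    rw [map_add]
    exact Submodule.add_mem _ hx hy

end tensorhelpers


/-- Let `R` be a PID, `(Mᵢ, gᵢ)` a stable inverse sequence of `R`-modules with inverse limit
`M`, and `N` an `R`-module.  Then the induced inverse sequence `(Mᵢ ⊗ N, gᵢ ⊗ id)` is stable,
and the canonical map `M ⊗ N → lim (Mᵢ ⊗ N)` induced by the maps `fᵢ ⊗ id` is an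
isomorphism. -/
theorem tensor_invLim_stable_and_canonical_iso
    (R : Type) [CommRing R] [IsDomain R] [IsPrincipalIdealRing R]
    (M : ℕ → Type) [∀ i, AddCommGroup (M i)] [∀ i, Module R (M i)]
    (g : ∀ i : ℕ, M (i + 1) →ₗ[R] M i)
    (N : Type) [AddCommGroup N] [Module R N]
    (hstable : IsStable R M g) :
    IsStable R (fun i => M i ⊗[R] N) (fun i => LinearMap.rTensor N (g i)) ∧
    ∃ h : ∀ x : ↥(invLim R M g) ⊗[R] N,
        (LinearMap.pi fun i => LinearMap.rTensor N (limProj R M g i)) x ∈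
          invLim R (fun i => M i ⊗[R] N) (fun i => LinearMap.rTensor N (g i)),
      Function.Bijective
        (LinearMap.codRestrict
          (invLim R (fun i => M i ⊗[R] N) (fun i => LinearMap.rTensor N (g i)))
          (LinearMap.pi fun i => LinearMap.rTensor N (limProj R M g i)) h) := by

  obtain ⟨hML, i₀, hinjfull⟩ := hstable
  choose d hd using hML
  set M' : ℕ → Type := fun i => M i ⊗[R] N with hM'
  set g' : ∀ i : ℕ, M' (i + 1) →ₗ[R] M' i := fun i => LinearMap.rTensor N (g i) with hg'
  -- the tensored projections
  set s : ∀ j : ℕ, (↥(invLim R M g) ⊗[R] N) →ₗ[R] M' j :=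
    fun j => LinearMap.rTensor N (limProj R M g j) with hs
  -- Mittag-Leffler for the tensored tower
  have hML' : MittagLeffler R M' g' := by
    intro i
    refine ⟨d i, fun k => ?_⟩
    rw [transDown_rTensor, transDown_rTensor]
    exact le_antisymm
      (range_rTensor_mono R N _ _ (le_of_eq (hd i k)))
      (range_rTensor_mono R N _ _ (le_of_eq (hd i k).symm))
  -- retractions
  have hret : ∀ i, i₀ ≤ i → ∃ r : M (i + d i) →ₗ[R] ↥(invLim R M g),
      (∀ x : ↥(invLim R M g), r (x.1 (i + d i)) = x) ∧
      (∀ m, (r m).1 i = transDown R M g i (d i) m) :=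
    fun i hi => retraction R M g (fun i => ⟨d i, hd i⟩) d hd i (hinjfull i hi)
  set j₀ : ℕ := i₀ + d i₀ with hj₀
  obtain ⟨r₀, hr₀B, hr₀A⟩ := hret i₀ le_rfl
  have hi₀j₀ : i₀ ≤ j₀ := Nat.le_add_right _ _
  -- map identities
  have idA : ∀ i (hi : i₀ ≤ i), (limProj R M g i) ∘ₗ (hret i hi).choose
      = transDown R M g i (d i) := by
    intro i hi
    ext m
    exact ((hret i hi).choose_spec).2 m
  have idC : ∀ a b : ℕ, limProj R M g a
      = (transDown R M g a b) ∘ₗ limProj R M g (a + b) := by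
    intro a b
    ext x
    exact (coherent R M g x.2 a b).symm
  -- coherence in the tensored limit
  have CL : ∀ t : (j : ℕ) → M' j, t ∈ invLim R M' g' → ∀ a b : ℕ,
      LinearMap.rTensor N (transDown R M g a b) (t (a + b)) = t a := by
    intro t ht a b
    have := coherent R M' g' ht a b
    rwa [transDown_rTensor] at this
  -- injectivity of the tensored projections from the limit of the tensored tower: step 1
  have SINJ : ∀ i, j₀ ≤ i → Function.Injective (s i) := by
    have hid : (LinearMap.rTensor N r₀) ∘ₗ s j₀ = LinearMap.id := by
      rw [hs, ← LinearMap.rTensor_comp]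
      have : r₀ ∘ₗ limProj R M g j₀ = LinearMap.id :=
        LinearMap.ext fun x => hr₀B x
      rw [this, LinearMap.rTensor_id]
    have base : Function.Injective (s j₀) := by
      intro u v huv
      have h1 := congrArg (LinearMap.rTensor N r₀) huv
      rw [← LinearMap.comp_apply, ← LinearMap.comp_apply, hid] at h1
      exact h1
    intro i hi u v huv
    obtain ⟨c, rfl⟩ := Nat.exists_eq_add_of_le hi
    apply base
    rw [hs]
    show LinearMap.rTensor N (limProj R M g j₀) u = LinearMap.rTensor N (limProj R M g j₀) v
    rw [idC j₀ c, LinearMap.rTensor_comp]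
    show LinearMap.rTensor N (transDown R M g j₀ c) (s (j₀ + c) u)
      = LinearMap.rTensor N (transDown R M g j₀ c) (s (j₀ + c) v)
    rw [huv]
  -- injectivity of the limit projections of the tensored tower
  have INJ : ∀ i, j₀ ≤ i → Function.Injective (limProj R M' g' i) := by
    intro i hi u v huv
    have hw : (u - v).1 i = 0 := by
      have : (u - v).1 i = u.1 i - v.1 i := rfl
      rw [this]
      exact sub_eq_zero.mpr huv
    have hw0 : u - v = 0 := by
      apply Subtype.ext
      funext k
      show (u - v).1 k = 0
      rcases le_or_gt k i with hk | hk
      · obtain ⟨c, rfl⟩ := Nat.exists_eq_add_of_le hk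
        rw [← CL (u - v).1 (u - v).2 k c, hw, map_zero]
      · have hk0 : i₀ ≤ k := le_trans (le_trans hi₀j₀ hi) (le_of_lt hk)
        obtain ⟨rk, hkB, hkA⟩ := hret k hk0
        set tL : ↥(invLim R M g) ⊗[R] N := LinearMap.rTensor N rk ((u - v).1 (k + d k))
          with htL
        have h1 : (u - v).1 k = s k tL := by
          rw [htL, hs]
          show _ = LinearMap.rTensor N (limProj R M g k) (LinearMap.rTensor N rk _)
          rw [← LinearMap.rTensor_comp_apply]
          have hA' : (limProj R M g k) ∘ₗ rk = transDown R M g k (d k) := by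
            ext m; exact hkA m
          rw [hA', CL (u - v).1 (u - v).2 k (d k)]
        have h2 : s i tL = 0 := by
          obtain ⟨c, rfl⟩ := Nat.exists_eq_add_of_le (le_of_lt hk)
          rw [hs]
          show LinearMap.rTensor N (limProj R M g i) tL = 0
          rw [idC i c, LinearMap.rTensor_comp, LinearMap.comp_apply]
          show LinearMap.rTensor N (transDown R M g i c) (s (i + c) tL) = 0
          rw [← h1, CL (u - v).1 (u - v).2 i c, hw]
        have h3 : tL = 0 := SINJ i hi (by rw [h2, map_zero])
        rw [h1, h3, map_zero]
    have := sub_eq_zero.mp hw0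
    exact this
  -- membership
  have hmem : ∀ x : ↥(invLim R M g) ⊗[R] N,
      (LinearMap.pi fun i => LinearMap.rTensor N (limProj R M g i)) x ∈
        invLim R M' g' := by
    intro x
    rw [mem_invLim]
    intro i
    rw [LinearMap.pi_apply, LinearMap.pi_apply]
    show s i x = g' i (s (i + 1) x)
    rw [hs, hg']
    show _ = LinearMap.rTensor N (g i) (LinearMap.rTensor N (limProj R M g (i + 1)) x)
    rw [← LinearMap.rTensor_comp_apply]
    have : (g i) ∘ₗ limProj R M g (i + 1) = limProj R M g i := by
      ext y
      exact ((mem_invLim R M g).mp y.2 i).symm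
    rw [this]
  refine ⟨⟨hML', j₀, INJ⟩, hmem, ?_, ?_⟩
  · -- injective
    intro u v huv
    apply SINJ j₀ le_rfl
    have := congrFun (congrArg Subtype.val huv) j₀
    exact this
  · -- surjective
    intro y
    obtain ⟨r₁, hr₁B, hr₁A⟩ := hret j₀ hi₀j₀
    refine ⟨LinearMap.rTensor N r₁ (y.1 (j₀ + d j₀)), ?_⟩
    apply INJ j₀ le_rfl
    show s j₀ (LinearMap.rTensor N r₁ (y.1 (j₀ + d j₀))) = y.1 j₀
    rw [hs, ← LinearMap.rTensor_comp_apply]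
    have hA' : (limProj R M g j₀) ∘ₗ r₁ = transDown R M g j₀ (d j₀) := by
      ext m; exact hr₁A m
    rw [hA']
    exact CL y.1 y.2 j₀ (d j₀)
end

section
/- Let R be a principal ideal domain, let (M_i, g_i) be a stable inverse sequence of R-modules with inverse limit M := lim M_i, and let N be an R-module. Then the canonical R-linear map Φ : lim→ Hom_R(M_i, N) → Hom_R(M, N), from the direct limit of the dual system (with transition maps given by precomposition with the bonding maps) and induced by precomposition with the projections f_i : M → M_i, is an isomorphism. -/
/-- The composite bonding map `f_i^j : M_j → M_i` (for `i ≤ j`) of an inverse sequence. -/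
noncomputable def transLE (R : Type) [CommRing R] (M : ℕ → Type)
    [∀ i, AddCommGroup (M i)] [∀ i, Module R (M i)]
    (g : ∀ i : ℕ, M (i + 1) →ₗ[R] M i) (i j : ℕ) (h : i ≤ j) : M j →ₗ[R] M i :=
  Nat.leRecOn h (fun {k} (f : M k →ₗ[R] M i) => f.comp (g k)) LinearMap.id

theorem transLE_apply_of_mem_invLim (R : Type) [CommRing R] (M : ℕ → Type)
    [∀ i, AddCommGroup (M i)] [∀ i, Module R (M i)]
    (g : ∀ i : ℕ, M (i + 1) →ₗ[R] M i) (x : (i : ℕ) → M i) (hx : x ∈ invLim R M g)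
    (i : ℕ) : ∀ (j : ℕ) (h : i ≤ j), transLE R M g i j h (x j) = x i := by
  have hg : ∀ m : ℕ, g m (x (m + 1)) = x m := by
    intro m
    have : eilenberg R M g x = 0 := hx
    have h2 := congrFun this m
    have h3 : x m - g m (x (m + 1)) = 0 := h2
    have := sub_eq_zero.mp h3
    exact this.symm
  intro j h
  induction j, h using Nat.le_induction with
  | base => simp [transLE, Nat.leRecOn_self]
  | succ j hij ih =>
      rw [transLE, Nat.leRecOn_succ hij, LinearMap.comp_apply, hg j]
      exact ih

/-- The canonical map `lim→ Hom(Mᵢ, N) → Hom(lim Mᵢ, N)`, given on the `i`-th component of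
the direct limit by precomposition with the projection `fᵢ : lim Mᵢ → Mᵢ`. -/
noncomputable def homLimCanonical (R : Type) [CommRing R] (M : ℕ → Type)
    [∀ i, AddCommGroup (M i)] [∀ i, Module R (M i)]
    (g : ∀ i : ℕ, M (i + 1) →ₗ[R] M i) (N : Type) [AddCommGroup N] [Module R N] :
    Module.DirectLimit (fun i => M i →ₗ[R] N)
        (fun i j hij => LinearMap.lcomp R N (transLE R M g i j hij)) →ₗ[R]
      (↥(invLim R M g) →ₗ[R] N) :=
  Module.DirectLimit.lift R ℕ (fun i => M i →ₗ[R] N)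
    (fun i j hij => LinearMap.lcomp R N (transLE R M g i j hij))
    (fun i => LinearMap.lcomp R N (limProj R M g i))
    (fun i j hij α => by
      ext x
      simp only [LinearMap.lcomp_apply, LinearMap.comp_apply, limProj,
        LinearMap.proj_apply, Submodule.subtype_apply]
      exact congrArg α (transLE_apply_of_mem_invLim R M g x.1 x.2 i j hij))


section AuxStable
variable (R : Type) [CommRing R] (M : ℕ → Type)
    [∀ i, AddCommGroup (M i)] [∀ i, Module R (M i)]
    (g : ∀ i : ℕ, M (i + 1) →ₗ[R] M i)



theorem transLE_self (i : ℕ) (h : i ≤ i) (x : M i) : transLE R M g i i h x = x := by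
  rw [transLE, Nat.leRecOn_self]; rfl

theorem transLE_succ (i j : ℕ) (h : i ≤ j) (h' : i ≤ j + 1) (x : M (j+1)) :
    transLE R M g i (j+1) h' x = transLE R M g i j h (g j x) := by
  rw [transLE, Nat.leRecOn_succ h]; rfl

theorem transLE_comp (i j k : ℕ) (h1 : i ≤ j) (h2 : j ≤ k) (h3 : i ≤ k) (x : M k) :
    transLE R M g i j h1 (transLE R M g j k h2 x) = transLE R M g i k h3 x := by
  induction k, h2 using Nat.le_induction with
  | base => rw [transLE_self]
  | succ k hjk ih =>
      rw [transLE_succ R M g j k hjk, transLE_succ R M g i k (h1.trans hjk), ih]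

theorem transLE_succ_self (i : ℕ) (h : i ≤ i+1) (x : M (i+1)) :
    transLE R M g i (i+1) h x = g i x := by
  rw [transLE_succ R M g i i le_rfl, transLE_self]

theorem g_transLE (i k : ℕ) (h : i + 1 ≤ k) (h' : i ≤ k) (x : M k) :
    g i (transLE R M g (i+1) k h x) = transLE R M g i k h' x := by
  rw [← transLE_succ_self R M g i (Nat.le_succ i), transLE_comp]

theorem range_transLE_antitone (i j k : ℕ) (h1 : i ≤ j) (h2 : j ≤ k) (h3 : i ≤ k) :
    LinearMap.range (transLE R M g i k h3) ≤ LinearMap.range (transLE R M g i j h1) := by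
  rintro m ⟨y, rfl⟩
  exact ⟨transLE R M g j k h2 y, transLE_comp R M g i j k h1 h2 h3 y⟩

theorem transDown_eq (i j : ℕ) :
    transDown R M g i j = transLE R M g i (i + j) (Nat.le_add_right i j) := by
  induction j with
  | zero =>
      ext x
      rw [transDown]
      exact (transLE_self R M g i _ x).symm
  | succ j ih =>
      ext x
      rw [transDown, LinearMap.comp_apply, ih]
      exact (transLE_succ R M g i (i + j) (Nat.le_add_right i j) (Nat.le_add_right i (j+1)) x).symm

/-- The stable image of `Mᵢ`. -/
noncomputable def stIm (i : ℕ) : Submodule R (M i) :=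
  ⨅ (j : ℕ) (h : i ≤ j), LinearMap.range (transLE R M g i j h)

theorem mem_stIm {i : ℕ} {m : M i} :
    m ∈ stIm R M g i ↔ ∀ (j : ℕ) (h : i ≤ j), m ∈ LinearMap.range (transLE R M g i j h) := by
  simp [stIm]

theorem proj_mem_stIm (x : (i : ℕ) → M i) (hx : x ∈ invLim R M g) (i : ℕ) :
    x i ∈ stIm R M g i :=
  (mem_stIm R M g).mpr fun j h => ⟨x j, transLE_apply_of_mem_invLim R M g x hx i j h⟩

theorem stIm_eq_range (hML : MittagLeffler R M g) (i : ℕ) :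
    ∃ (j : ℕ) (h : i ≤ j), stIm R M g i = LinearMap.range (transLE R M g i j h) := by
  obtain ⟨j₀, hj₀⟩ := hML i
  refine ⟨i + j₀, Nat.le_add_right i j₀, le_antisymm ?_ ?_⟩
  · exact iInf_le_of_le (i + j₀) (iInf_le _ _)
  · rw [stIm]
    refine le_iInf fun k => le_iInf fun hk => ?_
    rcases le_or_gt k (i + j₀) with hle | hlt
    · exact range_transLE_antitone R M g i k (i + j₀) hk hle _
    · obtain ⟨d, rfl⟩ : ∃ d, k = i + (j₀ + d) := ⟨k - i - j₀, by omega⟩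
      have := hj₀ d
      rw [transDown_eq, transDown_eq] at this
      rw [← this]

theorem stIm_step (hML : MittagLeffler R M g) (i : ℕ) (m : M i) (hm : m ∈ stIm R M g i) :
    ∃ m' ∈ stIm R M g (i + 1), g i m' = m := by
  obtain ⟨j₂, hj₂, hstab⟩ := stIm_eq_range R M g hML (i + 1)
  set k := max j₂ (i + 1) with hk
  have hk1 : i + 1 ≤ k := le_max_right _ _
  have hik : i ≤ k := (Nat.le_succ i).trans hk1
  obtain ⟨y, hy⟩ := (mem_stIm R M g).mp hm k hik
  refine ⟨transLE R M g (i+1) k hk1 y, ?_, ?_⟩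
  · rw [hstab]
    exact range_transLE_antitone R M g (i+1) j₂ k hj₂ (le_max_left _ _) _ ⟨y, rfl⟩
  · rw [g_transLE R M g i k hk1 hik, hy]

theorem stIm_le_range_limProj (hML : MittagLeffler R M g) (i : ℕ) :
    stIm R M g i ≤ LinearMap.range (limProj R M g i) := by
  intro m hm
  choose step hstep1 hstep2 using stIm_step R M g hML
  let t : (k : ℕ) → {v : M (i + k) // v ∈ stIm R M g (i + k)} :=
    fun k => Nat.rec ⟨m, hm⟩ (fun k p => ⟨step (i + k) p.1 p.2, hstep1 (i + k) p.1 p.2⟩) k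
  have ht : ∀ k, g (i + k) (t (k + 1)).1 = (t k).1 := fun k => hstep2 (i + k) (t k).1 (t k).2
  let x : ∀ n, M n := fun n => transLE R M g n (i + n) (Nat.le_add_left n i) (t n).1
  have hx : x ∈ invLim R M g := by
    show eilenberg R M g x = 0
    funext n
    show x n - g n (x (n + 1)) = 0
    rw [sub_eq_zero]
    show x n = g n (transLE R M g (n+1) (i + n + 1) (Nat.le_add_left (n+1) i) (t (n+1)).1)
    rw [g_transLE R M g n (i + n + 1) (Nat.le_add_left (n+1) i) (Nat.le_add_left n i |>.trans (Nat.le_succ _)),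
      ← transLE_comp R M g n (i + n) (i + n + 1) (Nat.le_add_left n i) (Nat.le_succ _) _,
      transLE_succ_self R M g (i + n) (Nat.le_succ _), ht n]
  have hinv : ∀ k, transLE R M g i (i + k) (Nat.le_add_right i k) (t k).1 = m := by
    intro k
    induction k with
    | zero => exact transLE_self R M g i _ m
    | succ k ih =>
        show transLE R M g i (i + k + 1) (Nat.le_add_right i (k+1)) (t (k+1)).1 = m
        rw [← transLE_comp R M g i (i + k) (i + k + 1) (Nat.le_add_right i k) (Nat.le_succ _) _,
          transLE_succ_self R M g (i + k) (Nat.le_succ _), ht k, ih]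
  refine ⟨⟨x, hx⟩, ?_⟩
  show x i = m
  show transLE R M g i (i + i) (Nat.le_add_left i i) (t i).1 = m
  rw [hinv i]

end AuxStable

/-- Let `R` be a PID, `(Mᵢ, gᵢ)` a stable inverse sequence of `R`-modules with inverse limit
`M`, and `N` an `R`-module.  Then the canonical map
`lim→ Hom_R(Mᵢ, N) → Hom_R(M, N)` is an isomorphism. -/
theorem homLimCanonical_bijective_of_stable
    (R : Type) [CommRing R] [IsDomain R] [IsPrincipalIdealRing R]
    (M : ℕ → Type) [∀ i, AddCommGroup (M i)] [∀ i, Module R (M i)]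
    (g : ∀ i : ℕ, M (i + 1) →ₗ[R] M i)
    (N : Type) [AddCommGroup N] [Module R N]
    (hstable : IsStable R M g) :
    Function.Bijective (homLimCanonical R M g N) := by
  obtain ⟨hML, i₀, hi₀⟩ := hstable
  constructor
  · rw [injective_iff_map_eq_zero]
    intro z hz
    obtain ⟨i, α, rfl⟩ := Module.DirectLimit.exists_of z
    rw [homLimCanonical, Module.DirectLimit.lift_of] at hz
    obtain ⟨j, hij, hstab⟩ := stIm_eq_range R M g hML i
    have hα : LinearMap.lcomp R N (transLE R M g i j hij) α = 0 := by
      ext y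
      have h1 : transLE R M g i j hij y ∈ stIm R M g i := hstab ▸ ⟨y, rfl⟩
      obtain ⟨x, hx⟩ := stIm_le_range_limProj R M g hML i h1
      have := LinearMap.congr_fun hz x
      simp only [LinearMap.lcomp_apply, LinearMap.zero_apply] at this ⊢
      rw [← hx, this]
    calc Module.DirectLimit.of R ℕ (fun i => M i →ₗ[R] N)
          (fun i j hij => LinearMap.lcomp R N (transLE R M g i j hij)) i α
        = Module.DirectLimit.of R ℕ (fun i => M i →ₗ[R] N)
          (fun i j hij => LinearMap.lcomp R N (transLE R M g i j hij)) j
          (LinearMap.lcomp R N (transLE R M g i j hij) α) := (Module.DirectLimit.of_f).symm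
      _ = 0 := by rw [hα, map_zero]
  · intro φ
    obtain ⟨j, hij, hstab⟩ := stIm_eq_range R M g hML i₀
    have hinj : Function.Injective (limProj R M g i₀) := hi₀ i₀ le_rfl
    set f := limProj R M g i₀ with hf
    let e : ↥(invLim R M g) ≃ₗ[R] LinearMap.range f := LinearEquiv.ofInjective f hinj
    have hr : ∀ y : M j, transLE R M g i₀ j hij y ∈ LinearMap.range f := by
      intro y
      exact stIm_le_range_limProj R M g hML i₀ (hstab ▸ ⟨y, rfl⟩)
    let τ : M j →ₗ[R] LinearMap.range f :=
      LinearMap.codRestrict (LinearMap.range f) (transLE R M g i₀ j hij) hr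
    let ψ : M j →ₗ[R] N := φ ∘ₗ (e.symm : ↥(LinearMap.range f) →ₗ[R] ↥(invLim R M g)) ∘ₗ τ
    refine ⟨Module.DirectLimit.of R ℕ (fun i => M i →ₗ[R] N)
      (fun i j hij => LinearMap.lcomp R N (transLE R M g i j hij)) j ψ, ?_⟩
    rw [homLimCanonical, Module.DirectLimit.lift_of]
    ext x
    have h1 : τ (x.1 j) = e x := by
      apply Subtype.ext
      show transLE R M g i₀ j hij (x.1 j) = ((e x : LinearMap.range f) : M i₀)
      rw [transLE_apply_of_mem_invLim R M g x.1 x.2 i₀ j hij]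
      exact (LinearEquiv.ofInjective_apply f (h := hinj) x).symm
    show ψ (x.1 j) = φ x
    show φ (e.symm (τ (x.1 j))) = φ x
    rw [h1, LinearEquiv.symm_apply_apply]
end

section
/- Let R be a field, let (M_i, g_i) be an inverse sequence of countably generated R-modules, and let N be an R-module. If the inverse limit lim M_i has countable dimension over R, then the canonical R-linear map Φ : lim→ Hom_R(M_i, N) → Hom_R(lim M_i, N) is surjective. -/
private lemma exists_min_nat (f : ℕ → ℕ) : ∃ n, ∀ m, f n ≤ f m := by
  classical
  have h : ∃ n, ∃ j, f j = n := ⟨f 0, 0, rfl⟩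
  obtain ⟨j₀, hj₀⟩ := Nat.find_spec h
  exact ⟨j₀, fun m => hj₀ ▸ Nat.find_min' h ⟨m, rfl⟩⟩

private lemma aux_not_le_sup {R L : Type} [Field R] [AddCommGroup L] [Module R L]
    (K : ℕ → Submodule R L) (hmono : ∀ {a b : ℕ}, a ≤ b → K b ≤ K a)
    (hbot : (⨅ j, K j) = ⊥) (i : ℕ) (hinf : ¬ FiniteDimensional R (K i))
    (G : Submodule R L) [FiniteDimensional R G] :
    ∃ j, ¬ K i ≤ G ⊔ K j := by
  classical
  by_contra hcon
  push_neg at hcon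
  set d := Module.finrank R G with hd
  obtain ⟨w, hwind, hwmem⟩ :
      ∃ w : Fin (d + 1) → L, LinearIndependent R w ∧ ∀ t, w t ∈ K i := by
    haveI : Infinite (Module.Basis.ofVectorSpaceIndex R ↥(K i)) := by
      rw [← not_finite_iff_infinite]
      intro hfin
      exact hinf (Module.Finite.of_basis (Module.Basis.ofVectorSpace R ↥(K i)))
    let b := Module.Basis.ofVectorSpace R ↥(K i)
    let emb : Fin (d + 1) ↪ Module.Basis.ofVectorSpaceIndex R ↥(K i) :=
      Fin.valEmbedding.trans (Infinite.natEmbedding _)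
    refine ⟨fun t => ((b (emb t) : ↥(K i)) : L), ?_, fun t => (b (emb t)).2⟩
    have h1 : LinearIndependent R (b ∘ emb) := b.linearIndependent.comp emb emb.injective
    exact h1.map' (K i).subtype (Submodule.ker_subtype _)
  set T := Fintype.linearCombination R w with hT
  set V : ℕ → Submodule R (Fin (d + 1) → R) := fun j => (K j).comap T with hV
  have hVne : ∀ j, V j ≠ ⊥ := by
    intro j
    have hm : ∀ t, w t ∈ G ⊔ K j := fun t => hcon j (hwmem t)
    choose u hu k hk huk using fun t => Submodule.mem_sup.mp (hm t)
    have hnind : ¬ LinearIndependent R (fun t => (⟨u t, hu t⟩ : G)) := by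
      intro hind
      have hcard := hind.fintype_card_le_finrank
      simp only [Fintype.card_fin] at hcard
      omega
    obtain ⟨c, hc0, t0, ht0⟩ := Fintype.not_linearIndependent_iff.mp hnind
    have hcu : ∑ t, c t • u t = 0 := by
      have h2 := congrArg (Submodule.subtype G) hc0
      simpa using h2
    refine (Submodule.ne_bot_iff _).mpr ⟨c, ?_, ?_⟩
    · show T c ∈ K j
      rw [hT, Fintype.linearCombination_apply]
      have hsplit : ∑ t, c t • w t = ∑ t, c t • u t + ∑ t, c t • k t := by
        rw [← Finset.sum_add_distrib]
        refine Finset.sum_congr rfl fun t _ => ?_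
        rw [← smul_add, huk t]
      rw [hsplit, hcu, zero_add]
      exact Submodule.sum_mem _ fun t _ => Submodule.smul_mem _ _ (hk t)
    · intro hc; rw [hc] at ht0; exact ht0 rfl
  obtain ⟨j₀, hj₀⟩ := exists_min_nat fun j => Module.finrank R (V j)
  obtain ⟨c, hcmem, hcne⟩ := (Submodule.ne_bot_iff _).mp (hVne j₀)
  have hall : ∀ j, c ∈ V j := by
    intro j
    rcases le_total j j₀ with h | h
    · exact Submodule.comap_mono (hmono h) hcmem
    · have hle : V j ≤ V j₀ := Submodule.comap_mono (hmono h)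
      have heq : V j = V j₀ := Submodule.eq_of_le_of_finrank_le hle (hj₀ j)
      rw [heq]; exact hcmem
  have hTc : T c = 0 := by
    have h1 : T c ∈ ⨅ j, K j := (Submodule.mem_iInf K).mpr fun j => hall j
    rw [hbot] at h1
    exact (Submodule.mem_bot R).mp h1
  have hz : ∀ t, c t = 0 := by
    refine Fintype.linearIndependent_iff.mp hwind c ?_
    rw [hT, Fintype.linearCombination_apply] at hTc
    exact hTc
  exact hcne (funext hz)

private lemma aux_exists_bot {R L : Type} [Field R] [AddCommGroup L] [Module R L]
    (K : ℕ → Submodule R L) (hmono : ∀ {a b : ℕ}, a ≤ b → K b ≤ K a)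
    (hbot : (⨅ j, K j) = ⊥) (i : ℕ) (hfd : FiniteDimensional R (K i)) :
    ∃ j, K j = ⊥ := by
  haveI := hfd
  haveI hinst : ∀ n : ℕ, FiniteDimensional R (K (i + n)) := fun n =>
    Submodule.finiteDimensional_of_le (hmono (Nat.le_add_right i n))
  obtain ⟨n₀, hn₀⟩ := exists_min_nat fun n => Module.finrank R (K (i + n))
  refine ⟨i + n₀, ?_⟩
  have heq : ∀ m, n₀ ≤ m → K (i + m) = K (i + n₀) := fun m hm =>
    Submodule.eq_of_le_of_finrank_le (hmono (by omega)) (hn₀ m)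
  have hle : K (i + n₀) ≤ ⨅ j, K j := by
    refine le_iInf fun j => ?_
    rw [← heq (n₀ + j) (by omega)]
    exact hmono (by omega)
  rw [hbot] at hle
  exact le_bot_iff.mp hle

private lemma aux_complete (R : Type) [CommRing R] (M : ℕ → Type)
    [∀ i, AddCommGroup (M i)] [∀ i, Module R (M i)]
    (g : ∀ i : ℕ, M (i + 1) →ₗ[R] M i)
    (s : ℕ → ↥(invLim R M g)) (idx : ℕ → ℕ) (hmono : Monotone idx) (hle : ∀ n, n ≤ idx n)
    (hstep : ∀ n, ((s (n + 1) : (i : ℕ) → M i)) (idx n) = (s n : (i : ℕ) → M i) (idx n)) :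
    ∃ x : ↥(invLim R M g), ∀ n,
      ((x : (i : ℕ) → M i) (idx n)) = (s n : (i : ℕ) → M i) (idx n) := by
  have coordz : ∀ (z : ↥(invLim R M g)) (a b : ℕ), a ≤ b →
      (z : (i : ℕ) → M i) b = 0 → (z : (i : ℕ) → M i) a = 0 := by
    intro z a b hab hzb
    have h := transLE_apply_of_mem_invLim R M g z.1 z.2 a b hab
    rw [hzb, map_zero] at h
    exact h.symm
  have sdiff : ∀ n m, n ≤ m → ∀ a, a ≤ idx n →
      (s m : (i : ℕ) → M i) a = (s n : (i : ℕ) → M i) a := by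
    intro n m hnm
    induction m, hnm using Nat.le_induction with
    | base => intro a _; rfl
    | succ m hnm ih =>
      intro a ha
      have hz : ((s (m + 1) - s m : ↥(invLim R M g)) : (i : ℕ) → M i) (idx m) = 0 := by
        have := hstep m
        simp only [Submodule.coe_sub, Pi.sub_apply]
        rw [this, sub_self]
      have h1 := coordz (s (m + 1) - s m) a (idx m) (le_trans ha (hmono hnm)) hz
      have h2 : (s (m + 1) : (i : ℕ) → M i) a - (s m : (i : ℕ) → M i) a = 0 := by
        simpa using h1
      rw [sub_eq_zero.mp h2]
      exact ih a ha
  refine ⟨⟨fun i => (s i : (j : ℕ) → M j) i, ?_⟩, ?_⟩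
  · show eilenberg R M g (fun i => (s i : (j : ℕ) → M j) i) = 0
    funext i
    have hmem : eilenberg R M g ((s (i + 1)) : (j : ℕ) → M j) = 0 := (s (i + 1)).2
    have h1 : (s (i + 1) : (j : ℕ) → M j) i
        - g i ((s (i + 1) : (j : ℕ) → M j) (i + 1)) = 0 := congrFun hmem i
    have h2 : (s (i + 1) : (j : ℕ) → M j) i = (s i : (j : ℕ) → M j) i :=
      sdiff i (i + 1) (Nat.le_succ i) i (hle i)
    rw [h2] at h1
    exact h1
  · intro n
    show (s (idx n) : (j : ℕ) → M j) (idx n) = (s n : (j : ℕ) → M j) (idx n)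
    exact sdiff n (idx n) (hle n) (idx n) le_rfl

open Cardinal

/-- Let `R` be a field, `(Mᵢ, gᵢ)` an inverse sequence of countably generated `R`-modules
and `N` an `R`-module.  If the inverse limit `lim Mᵢ` has countable dimension over `R`, then
the canonical map `lim→ Hom_R(Mᵢ, N) → Hom_R(lim Mᵢ, N)` is surjective. -/
theorem homLimCanonical_surjective_of_countable_dim
    (R : Type) [Field R]
    (M : ℕ → Type) [∀ i, AddCommGroup (M i)] [∀ i, Module R (M i)]
    (g : ∀ i : ℕ, M (i + 1) →ₗ[R] M i)
    (N : Type) [AddCommGroup N] [Module R N]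
    (hcg : ∀ i : ℕ, CountablyGeneratedMod R (M i))
    (hdim : Module.rank R ↥(invLim R M g) ≤ ℵ₀) :
    Function.Surjective (homLimCanonical R M g N) := by
  classical
  intro φ
  set L := ↥(invLim R M g) with hL
  set K : ℕ → Submodule R L := fun i => LinearMap.ker (limProj R M g i) with hK
  have hmemK : ∀ (z : L) (i : ℕ), z ∈ K i ↔ (z : (j : ℕ) → M j) i = 0 := fun z i => Iff.rfl
  have hmono : ∀ {a b : ℕ}, a ≤ b → K b ≤ K a := by
    intro a b hab z hz
    rw [hmemK] at hz ⊢
    have h := transLE_apply_of_mem_invLim R M g z.1 z.2 a b hab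
    rw [hz, map_zero] at h
    exact h.symm
  have hbot : (⨅ j, K j) = ⊥ := by
    refine le_bot_iff.mp fun z hz => ?_
    have hz' : ∀ j, (z : (j : ℕ) → M j) j = 0 := fun j =>
      (hmemK z j).mp ((Submodule.mem_iInf K).mp hz j)
    have : z = 0 := Subtype.ext (funext hz')
    simp [this]
  by_cases hinj : ∃ i, K i = ⊥
  · obtain ⟨i₀, hi₀⟩ := hinj
    have hinj' : Function.Injective (limProj R M g i₀) := by
      rw [← LinearMap.ker_eq_bot]
      exact hi₀
    set f := limProj R M g i₀ with hf
    set e := LinearEquiv.ofInjective f hinj' with he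
    obtain ⟨q, hq⟩ := Submodule.exists_isCompl (LinearMap.range f)
    set π := (LinearMap.range f).linearProjOfIsCompl q hq with hπ
    set α : M i₀ →ₗ[R] N := (φ.comp e.symm.toLinearMap).comp π with hα
    refine ⟨Module.DirectLimit.of R ℕ (fun i => M i →ₗ[R] N)
      (fun i j hij => LinearMap.lcomp R N (transLE R M g i j hij)) i₀ α, ?_⟩
    unfold homLimCanonical
    rw [Module.DirectLimit.lift_of]
    ext x
    show α (f x) = φ x
    have h1 : π (f x) = ⟨f x, LinearMap.mem_range_self f x⟩ := by
      have := Submodule.linearProjOfIsCompl_apply_left hq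
        (⟨f x, LinearMap.mem_range_self f x⟩ : LinearMap.range f)
      exact this
    have h2 : e.symm ⟨f x, LinearMap.mem_range_self f x⟩ = x := by
      have : (⟨f x, LinearMap.mem_range_self f x⟩ : LinearMap.range f) = e x :=
        Subtype.ext (by simp [he])
      rw [this, LinearEquiv.symm_apply_apply]
    rw [hα]
    simp only [LinearMap.comp_apply, LinearEquiv.coe_toLinearMap]
    rw [h1, h2]
  · push_neg at hinj
    exfalso
    have hinfdim : ∀ i, ¬ FiniteDimensional R ↥(K i) := by
      intro i hfd
      obtain ⟨j, hj⟩ := aux_exists_bot K hmono hbot i hfd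
      exact hinj j hj
    obtain ⟨e, hespan⟩ : ∃ e : ℕ → L, Submodule.span R (Set.range e) = ⊤ := by
      set b := Module.Basis.ofVectorSpace R L with hb
      have hcnt : (Module.Basis.ofVectorSpaceIndex R L).Countable := by
        rw [← Set.countable_coe_iff]
        rw [← Cardinal.mk_le_aleph0_iff, b.mk_eq_rank'']
        exact hdim
      have hS : (insert (0 : L) (Module.Basis.ofVectorSpaceIndex R L)).Countable := hcnt.insert 0
      obtain ⟨e, hee⟩ := Set.Countable.exists_eq_range hS ⟨0, Set.mem_insert _ _⟩
      refine ⟨e, ?_⟩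
      rw [← hee, Submodule.span_insert_zero]
      have h1 := b.span_eq
      rwa [Module.Basis.range_ofVectorSpace] at h1
    set F : ℕ → Submodule R L := fun n => Submodule.span R (e '' Set.Iio n) with hF
    haveI hFfd : ∀ n, FiniteDimensional R (F n) := fun n =>
      FiniteDimensional.span_of_finite R ((Set.finite_Iio n).image e)
    have hFmono : Monotone F := fun a b hab =>
      Submodule.span_mono (Set.image_mono (Set.Iio_subset_Iio hab))
    have hFcover : ∀ x : L, ∃ n, x ∈ F n := by
      intro x
      have hx : x ∈ ⨆ n, F n := by
        have htop : (⊤ : Submodule R L) ≤ ⨆ n, F n := by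
          rw [← hespan]
          refine Submodule.span_le.mpr ?_
          rintro _ ⟨m, rfl⟩
          exact Submodule.mem_iSup_of_mem (m + 1)
            (Submodule.subset_span ⟨m, Nat.lt_succ_self m, rfl⟩)
        exact htop Submodule.mem_top
      exact (Submodule.mem_iSup_of_directed F hFmono.directed_le).mp hx
    have step : ∀ (n : ℕ) (p : L × ℕ), ∃ v : L, ∃ j : ℕ, p.2 < j ∧ v ∈ K p.2 ∧
        ∀ k ∈ K j, p.1 + v + k ∉ F n := by
      intro n p
      obtain ⟨j', hj'⟩ := aux_not_le_sup K hmono hbot p.2 (hinfdim p.2)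
        (F n ⊔ Submodule.span R {p.1})
      obtain ⟨v, hvK, hvn⟩ := SetLike.not_le_iff_exists.mp hj'
      refine ⟨v, max j' (p.2 + 1),
        lt_of_lt_of_le (Nat.lt_succ_self _) (le_max_right _ _), hvK, ?_⟩
      intro k hk hmem
      apply hvn
      have hkj : k ∈ K j' := hmono (le_max_left _ _) hk
      have hveq : v = (p.1 + v + k) - p.1 - k := by abel
      rw [hveq]
      refine Submodule.sub_mem _ (Submodule.sub_mem _ ?_ ?_) ?_
      · exact Submodule.mem_sup_left (Submodule.mem_sup_left hmem)
      · exact Submodule.mem_sup_left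
          (Submodule.mem_sup_right (Submodule.mem_span_singleton_self _))
      · exact Submodule.mem_sup_right hkj
    choose vfun jfun hjlt hvK havoid using step
    set seq : ℕ → L × ℕ :=
      fun n => Nat.rec ((0 : L), 0) (fun n p => (p.1 + vfun n p, jfun n p)) n with hseqdef
    set s : ℕ → L := fun n => (seq n).1 with hs
    set idx : ℕ → ℕ := fun n => (seq n).2 with hidxdef
    have hseq : ∀ n, seq (n + 1) = (s n + vfun n (seq n), jfun n (seq n)) := fun n => rfl
    have hidx : ∀ n, idx n < idx (n + 1) := fun n => hjlt n (seq n)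
    have hidxmono : StrictMono idx := strictMono_nat_of_lt_succ hidx
    have hstepK : ∀ n, s (n + 1) - s n ∈ K (idx n) := by
      intro n
      have h1 : s (n + 1) - s n = vfun n (seq n) := by
        show (seq (n + 1)).1 - s n = vfun n (seq n)
        rw [hseq n]
        exact add_sub_cancel_left _ _
      rw [h1]
      exact hvK n (seq n)
    have havoid' : ∀ n, ∀ k ∈ K (idx (n + 1)), s (n + 1) + k ∉ F n := by
      intro n k hk
      have h1 : s (n + 1) = s n + vfun n (seq n) := by
        show (seq (n + 1)).1 = s n + vfun n (seq n)
        rw [hseq n]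
      have h2 : idx (n + 1) = jfun n (seq n) := by
        show (seq (n + 1)).2 = jfun n (seq n)
        rw [hseq n]
      rw [h1]
      exact havoid n (seq n) k (h2 ▸ hk)
    obtain ⟨x, hx⟩ := aux_complete R M g s idx hidxmono.monotone
      (fun n => hidxmono.le_apply) (fun n => by
        have := hstepK n
        rw [hmemK] at this
        have h2 : (s (n + 1) : (j : ℕ) → M j) (idx n)
            - (s n : (j : ℕ) → M j) (idx n) = 0 := this
        exact sub_eq_zero.mp h2)
    obtain ⟨n, hn⟩ := hFcover x
    have hxk : x - s (n + 1) ∈ K (idx (n + 1)) := by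
      refine LinearMap.mem_ker.mpr ?_
      rw [map_sub]
      show (x : (j : ℕ) → M j) (idx (n + 1))
        - (s (n + 1) : (j : ℕ) → M j) (idx (n + 1)) = 0
      rw [hx (n + 1), sub_self]
    refine havoid' n (x - s (n + 1)) hxk ?_
    have : s (n + 1) + (x - s (n + 1)) = x := by abel
    rw [this]
    exact hn
end
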